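/- arXiv:1006.3436 — 7 statements merged into one kernel-verified Lean document; each statement's English description precedes it below -/
import Mathlib

section
/- Let F be a sequence of the form f_n = Σ_{k=1}^m P_k(n) λ_k^n with distinct nonzero λ_k, nonzero polynomials P_k, and characteristic polynomial P(z) = Π_k (z − λ_k)^{ν_k} where ν_k = deg P_k + 1. Then F satisfies the LRF with coefficients (−b_0/b_r, …, −b_{r-1}/b_r) determined by a monically-scalable polynomial B(z) = b_r z^r + … + b_0 (b_r ≠ 0), i.e., f_{n+r} = −Σ_{k=0}^{r-1} (b_k/b_r) f_{n+k} for all n, if and only if P(z) divides B(z). -/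
open Polynomial Finset

noncomputable def Sop (lam : ℂ) : Module.End ℂ (Polynomial ℂ) :=
  lam • (aeval (X + C (1:ℂ)) : Polynomial ℂ →ₐ[ℂ] Polynomial ℂ).toLinearMap

lemma sop_apply (lam : ℂ) (Q : Polynomial ℂ) :
    Sop lam Q = lam • Q.comp (X + C (1:ℂ)) := by
  simp [Sop, aeval_def, comp]

lemma sop_pow (lam : ℂ) (k : ℕ) (Q : Polynomial ℂ) :
    (Sop lam ^ k) Q = lam ^ k • Q.comp (X + C (k:ℂ)) := by
  induction k generalizing Q with
  | zero => simp
  | succ k ih =>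
    rw [pow_succ, Module.End.mul_apply, sop_apply, map_smul, ih (Q.comp (X + C 1)), comp_assoc]
    rw [smul_smul, mul_comm, ← pow_succ]
    congr 2
    simp [comp, eval₂_eq_eval_map]
    ring

lemma aop_apply (lam : ℂ) (B Q : Polynomial ℂ) :
    (aeval (Sop lam) B) Q
      = ∑ i ∈ range (B.natDegree + 1), B.coeff i • (lam ^ i • Q.comp (X + C (i:ℂ))) := by
  rw [aeval_eq_sum_range, LinearMap.sum_apply]
  exact Finset.sum_congr rfl fun i _ => by rw [LinearMap.smul_apply, sop_pow]

lemma aop_eval (lam : ℂ) (B Q : Polynomial ℂ) (x : ℂ) :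
    ((aeval (Sop lam) B) Q).eval x
      = ∑ i ∈ range (B.natDegree + 1), B.coeff i * lam ^ i * Q.eval (x + i) := by
  rw [aop_apply, eval_finset_sum]
  refine Finset.sum_congr rfl fun i _ => ?_
  simp [eval_comp, mul_assoc]

lemma comp_linear_coeff_top (Q : Polynomial ℂ) (c : ℂ) :
    (Q.comp (X + C c)).coeff Q.natDegree = Q.leadingCoeff := by
  by_cases hQ : Q = 0
  · simp [hQ]
  have hdeg : (Q.comp (X + C c)).natDegree = Q.natDegree := by
    rw [natDegree_comp, natDegree_X_add_C, mul_one]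
  have hl : (Q.comp (X + C c)).leadingCoeff = Q.leadingCoeff := by
    rw [leadingCoeff_comp (by rw [natDegree_X_add_C]; norm_num)]
    simp
  rw [← hdeg, ← hl]; rfl

lemma aop_coeff_top (lam : ℂ) (B Q : Polynomial ℂ) :
    ((aeval (Sop lam) B) Q).coeff Q.natDegree = B.eval lam * Q.leadingCoeff := by
  rw [aop_apply, finset_sum_coeff, eval_eq_sum_range, Finset.sum_mul]
  refine Finset.sum_congr rfl fun i _ => ?_
  rw [coeff_smul, coeff_smul, comp_linear_coeff_top]
  simp [mul_assoc]

lemma comp_linear_coeff_ge (R : Polynomial ℂ) (c : ℂ) {k : ℕ} (hk : R.natDegree ≤ k) :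
    (R.comp (X + C c)).coeff k = R.coeff k := by
  rcases eq_or_lt_of_le hk with h | h
  · subst h; rw [comp_linear_coeff_top]; rfl
  · rw [coeff_eq_zero_of_natDegree_lt h, coeff_eq_zero_of_natDegree_lt]
    calc (R.comp (X + C c)).natDegree = R.natDegree := by
          rw [natDegree_comp, natDegree_X_add_C, mul_one]
      _ < k := h

lemma delta_degree_lt {Q : Polynomial ℂ} (hQ : Q ≠ 0) :
    degree (Q.comp (X + C (1:ℂ)) - Q) < degree Q := by
  have hcomp : Q.comp (X + C (1:ℂ)) ≠ 0 := fun h => by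
    have := comp_linear_coeff_top Q (1:ℂ)
    rw [h, coeff_zero] at this
    exact hQ (leadingCoeff_eq_zero.mp this.symm)
  have hdeg : (Q.comp (X + C (1:ℂ))).degree = Q.degree := by
    rw [degree_eq_natDegree hcomp, degree_eq_natDegree hQ, natDegree_comp,
      natDegree_X_add_C, mul_one]
  have hl : (Q.comp (X + C (1:ℂ))).leadingCoeff = Q.leadingCoeff := by
    rw [leadingCoeff, natDegree_comp, natDegree_X_add_C, mul_one, comp_linear_coeff_top]
  calc degree (Q.comp (X + C (1:ℂ)) - Q) < (Q.comp (X + C (1:ℂ))).degree :=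
        degree_sub_lt hdeg hcomp hl
    _ = Q.degree := hdeg

lemma delta_coeff (Q : Polynomial ℂ) (h : 1 ≤ Q.natDegree) :
    (Q.comp (X + C (1:ℂ)) - Q).coeff (Q.natDegree - 1)
      = (Q.natDegree : ℂ) * Q.leadingCoeff := by
  set d := Q.natDegree with hd
  have hE : Q.eraseLead.natDegree ≤ d - 1 := eraseLead_natDegree_le Q
  conv_lhs => rw [← eraseLead_add_C_mul_X_pow Q]
  rw [add_comp, coeff_sub, coeff_add, coeff_add,
    comp_linear_coeff_ge Q.eraseLead _ hE]
  have h1 : ((C Q.leadingCoeff * X ^ d).comp (X + C (1:ℂ))).coeff (d-1)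
      = Q.leadingCoeff * d := by
    rw [mul_comp, C_comp, X_pow_comp]
    have : (X + C (1:ℂ)) = X + 1 := by rw [map_one]
    rw [this, coeff_C_mul, coeff_X_add_one_pow]
    congr 1
    rw [Nat.choose_symm h, Nat.choose_one_right]
  have h2 : (C Q.leadingCoeff * X ^ d).coeff (d - 1) = 0 := by
    rw [coeff_C_mul, coeff_X_pow, if_neg (by omega), mul_zero]
  rw [h1, h2]
  ring

lemma delta_zero_of_natDegree_zero {Q : Polynomial ℂ} (h : Q.natDegree = 0) :
    Q.comp (X + C (1:ℂ)) - Q = 0 := by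
  obtain ⟨c, rfl⟩ := natDegree_eq_zero.mp h
  simp

lemma delta_ne_zero {Q : Polynomial ℂ} (hQ : Q ≠ 0) (h : 1 ≤ Q.natDegree) :
    Q.comp (X + C (1:ℂ)) - Q ≠ 0 := by
  intro h0
  have := delta_coeff Q h
  rw [h0, coeff_zero] at this
  have : (Q.natDegree : ℂ) * Q.leadingCoeff ≠ 0 :=
    mul_ne_zero (Nat.cast_ne_zero.mpr (by omega)) (leadingCoeff_ne_zero.mpr hQ)
  exact this (by rw [← delta_coeff Q h, h0, coeff_zero])

lemma delta_natDegree {Q : Polynomial ℂ} (hQ : Q ≠ 0) (h : 1 ≤ Q.natDegree) :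
    (Q.comp (X + C (1:ℂ)) - Q).natDegree = Q.natDegree - 1 := by
  have hne := delta_ne_zero hQ h
  have hlt : (Q.comp (X + C (1:ℂ)) - Q).natDegree < Q.natDegree :=
    natDegree_lt_natDegree hne (delta_degree_lt hQ)
  have hge : Q.natDegree - 1 ≤ (Q.comp (X + C (1:ℂ)) - Q).natDegree := by
    apply le_natDegree_of_ne_zero
    rw [delta_coeff Q h]
    exact mul_ne_zero (Nat.cast_ne_zero.mpr (by omega)) (leadingCoeff_ne_zero.mpr hQ)
  omega

lemma aop_X_sub_C (lam : ℂ) (Q : Polynomial ℂ) :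
    (aeval (Sop lam) (X - C lam)) Q = lam • (Q.comp (X + C (1:ℂ)) - Q) := by
  rw [map_sub, aeval_X, aeval_C, LinearMap.sub_apply, sop_apply,
    Module.algebraMap_end_apply, smul_sub]

lemma aop_kill (lam : ℂ) : ∀ d (Q : Polynomial ℂ), Q.natDegree ≤ d →
    (aeval (Sop lam) ((X - C lam) ^ (d + 1))) Q = 0 := by
  intro d
  induction d with
  | zero =>
    intro Q hQ
    rw [pow_one, aop_X_sub_C, delta_zero_of_natDegree_zero (by omega), smul_zero]
  | succ d ih =>
    intro Q hQ
    rw [pow_succ, map_mul, Module.End.mul_apply, aop_X_sub_C, map_smul]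
    by_cases h0 : Q.comp (X + C (1:ℂ)) - Q = 0
    · rw [h0, map_zero, smul_zero]
    rcases Nat.eq_zero_or_pos Q.natDegree with h | h
    · exact absurd (delta_zero_of_natDegree_zero h) h0
    have hQ0 : Q ≠ 0 := fun hh => h0 (by simp [hh])
    rw [ih _ (by rw [delta_natDegree hQ0 h]; omega), smul_zero]

lemma aop_dvd (lam : ℂ) (hlam : lam ≠ 0) :
    ∀ d (Q B : Polynomial ℂ), Q ≠ 0 → Q.natDegree ≤ d →
      (aeval (Sop lam) B) Q = 0 → (X - C lam) ^ (Q.natDegree + 1) ∣ B := by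
  intro d
  induction d with
  | zero =>
    intro Q B hQ hd h
    have : B.eval lam * Q.leadingCoeff = 0 := by
      rw [← aop_coeff_top, h, coeff_zero]
    have hroot : IsRoot B lam :=
      (mul_eq_zero.mp this).resolve_right (leadingCoeff_ne_zero.mpr hQ)
    rw [Nat.le_zero.mp hd, pow_one]
    exact dvd_iff_isRoot.mpr hroot
  | succ d ih =>
    intro Q B hQ hd h
    have : B.eval lam * Q.leadingCoeff = 0 := by
      rw [← aop_coeff_top, h, coeff_zero]
    have hroot : IsRoot B lam :=
      (mul_eq_zero.mp this).resolve_right (leadingCoeff_ne_zero.mpr hQ)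
    obtain ⟨B', rfl⟩ := dvd_iff_isRoot.mpr hroot
    rcases Nat.eq_zero_or_pos Q.natDegree with h0 | h0
    · rw [h0, pow_one]; exact dvd_mul_right _ _
    have hΔne : Q.comp (X + C (1:ℂ)) - Q ≠ 0 := delta_ne_zero hQ h0
    have hB' : (aeval (Sop lam) B') (Q.comp (X + C (1:ℂ)) - Q) = 0 := by
      have := h
      rw [mul_comm, map_mul, Module.End.mul_apply, aop_X_sub_C, map_smul] at this
      exact (smul_eq_zero.mp this).resolve_left hlam
    have hdvd := ih _ B' hΔne (by rw [delta_natDegree hQ h0]; omega) hB'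
    rw [delta_natDegree hQ h0] at hdvd
    obtain ⟨c, rfl⟩ := hdvd
    refine ⟨c, ?_⟩
    have h1 : Q.natDegree + 1 = 1 + (Q.natDegree - 1 + 1) := by omega
    rw [h1, pow_add, pow_one]
    ring

lemma eval_nat_zero {p : Polynomial ℂ} (h : ∀ n : ℕ, p.eval (n : ℂ) = 0) : p = 0 := by
  refine p.eq_zero_of_infinite_isRoot ?_
  exact Set.infinite_of_injective_forall_mem (f := (Nat.cast : ℕ → ℂ))
    Nat.cast_injective (fun n => h n)

lemma indep {m : ℕ} (lam : Fin m → ℂ) (hinj : Function.Injective lam)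
    (hne : ∀ k, lam k ≠ 0) (Q : Fin m → Polynomial ℂ)
    (h : ∀ n : ℕ, ∑ j, (Q j).eval (n : ℂ) * lam j ^ n = 0) : ∀ j, Q j = 0 := by
  intro j
  set A : Polynomial ℂ :=
    ∏ i ∈ Finset.univ.erase j, (X - C (lam i)) ^ ((Q i).natDegree + 1) with hA
  have key : ∀ n : ℕ,
      ∑ i, ((aeval (Sop (lam i)) A) (Q i)).eval (n : ℂ) * lam i ^ n = 0 := by
    intro n
    have step1 : ∑ i, ((aeval (Sop (lam i)) A) (Q i)).eval (n : ℂ) * lam i ^ n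
        = ∑ i, ∑ k ∈ range (A.natDegree + 1),
            A.coeff k * ((Q i).eval (((n + k : ℕ) : ℂ)) * lam i ^ (n + k)) := by
      refine Finset.sum_congr rfl fun i _ => ?_
      rw [aop_eval, Finset.sum_mul]
      refine Finset.sum_congr rfl fun k _ => ?_
      push_cast
      ring
    rw [step1, Finset.sum_comm]
    refine Finset.sum_eq_zero fun k _ => ?_
    rw [← Finset.mul_sum, h (n + k), mul_zero]
  have hzero : ∀ i, i ≠ j → (aeval (Sop (lam i)) A) (Q i) = 0 := by
    intro i hij
    have hmem : i ∈ Finset.univ.erase j := Finset.mem_erase.mpr ⟨hij, Finset.mem_univ i⟩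
    obtain ⟨c, hc⟩ := Finset.dvd_prod_of_mem
      (fun i => (X - C (lam i)) ^ ((Q i).natDegree + 1)) hmem
    rw [hA, hc, mul_comm, map_mul, Module.End.mul_apply, aop_kill _ _ _ le_rfl, map_zero]
  have key2 : ∀ n : ℕ, ((aeval (Sop (lam j)) A) (Q j)).eval (n : ℂ) * lam j ^ n = 0 := by
    intro n
    have := key n
    rwa [Finset.sum_eq_single j (fun i _ hij => by rw [hzero i hij]; simp)
      (fun hj => absurd (Finset.mem_univ j) hj)] at this
  have hpoly : (aeval (Sop (lam j)) A) (Q j) = 0 := by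
    apply eval_nat_zero
    intro n
    have := key2 n
    exact (mul_eq_zero.mp this).resolve_right (pow_ne_zero n (hne j))
  have hcoeff : A.eval (lam j) * (Q j).leadingCoeff = 0 := by
    rw [← aop_coeff_top, hpoly, coeff_zero]
  have hAne : A.eval (lam j) ≠ 0 := by
    rw [hA, eval_prod]
    apply Finset.prod_ne_zero_iff.mpr
    intro i hi
    simp only [eval_pow, eval_sub, eval_X, eval_C]
    exact pow_ne_zero _ (sub_ne_zero.mpr fun he =>
      (Finset.mem_erase.mp hi).1 (hinj he).symm)
  have : (Q j).leadingCoeff = 0 := (mul_eq_zero.mp hcoeff).resolve_left hAne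
  exact leadingCoeff_eq_zero.mp this

/-- A sequence of finite difference dimension with characteristic polynomial
`P(z) = ∏ (z - λ k)^(deg Pₖ + 1)` satisfies the LRF encoded by a polynomial
`B(z) = b_r z^r + … + b_0` (with `b_r ≠ 0`) if and only if `P ∣ B`. -/
theorem lrf_iff_charpoly_dvd
    (f : ℕ → ℂ) (m : ℕ) (lam : Fin m → ℂ) (P : Fin m → Polynomial ℂ)
    (hinj : Function.Injective lam) (hne : ∀ k, lam k ≠ 0) (hP : ∀ k, P k ≠ 0)
    (hf : ∀ n : ℕ, f n = ∑ k, (P k).eval (n : ℂ) * lam k ^ n)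
    (r : ℕ) (b : ℕ → ℂ) (hbr : b r ≠ 0) :
    (∀ n : ℕ, f (n + r) = -∑ k ∈ Finset.range r, (b k / b r) * f (n + k)) ↔
      (∏ k, (X - C (lam k)) ^ ((P k).natDegree + 1)) ∣
        (∑ k ∈ Finset.range (r + 1), C (b k) * X ^ k) := by
  set B : Polynomial ℂ := ∑ k ∈ Finset.range (r + 1), C (b k) * X ^ k with hB
  have hBcoeff : ∀ k, k ≤ r → B.coeff k = b k := by
    intro k hk
    rw [hB, finset_sum_coeff]
    rw [Finset.sum_eq_single k (fun i _ hik => by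
      rw [coeff_C_mul, coeff_X_pow, if_neg (fun hh => hik hh.symm), mul_zero])
      (fun hk' => absurd (Finset.mem_range.mpr (by omega)) hk')]
    rw [coeff_C_mul, coeff_X_pow, if_pos rfl, mul_one]
  have hBdeg : B.natDegree = r := by
    have hle : B.natDegree ≤ r := by
      apply natDegree_sum_le_of_forall_le
      intro i hi
      exact (natDegree_C_mul_le _ _).trans (by
        rw [natDegree_X_pow]; exact Nat.lt_succ_iff.mp (Finset.mem_range.mp hi))
    have hge : r ≤ B.natDegree := le_natDegree_of_ne_zero (by rw [hBcoeff r le_rfl]; exact hbr)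
    omega
  set Qp : Fin m → Polynomial ℂ := fun j => (aeval (Sop (lam j)) B) (P j) with hQp
  have bridge : ∀ n : ℕ, ∑ k ∈ Finset.range (r + 1), b k * f (n + k)
      = ∑ j, (Qp j).eval (n : ℂ) * lam j ^ n := by
    intro n
    have : ∑ k ∈ Finset.range (r + 1), b k * f (n + k)
        = ∑ k ∈ Finset.range (r + 1), ∑ j,
            b k * ((P j).eval (((n + k : ℕ) : ℂ)) * lam j ^ (n + k)) := by
      refine Finset.sum_congr rfl fun k _ => ?_
      rw [hf (n + k), Finset.mul_sum]
    rw [this, Finset.sum_comm]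
    refine Finset.sum_congr rfl fun j _ => ?_
    rw [hQp]
    rw [aop_eval, Finset.sum_mul, hBdeg]
    refine Finset.sum_congr rfl fun k hk => ?_
    rw [hBcoeff k (Nat.lt_succ_iff.mp (Finset.mem_range.mp hk))]
    push_cast
    rw [pow_add]
    ring
  have hiff : ∀ n : ℕ, (f (n + r) = -∑ k ∈ Finset.range r, (b k / b r) * f (n + k)) ↔
      ∑ k ∈ Finset.range (r + 1), b k * f (n + k) = 0 := by
    intro n
    rw [Finset.sum_range_succ]
    constructor
    · intro h
      rw [h, mul_neg, Finset.mul_sum, add_neg_eq_zero]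
      refine Finset.sum_congr rfl fun k _ => ?_
      field_simp
    · intro h
      have h2 : f (n + r) * b r = -∑ k ∈ Finset.range r, b k * f (n + k) := by
        rw [mul_comm]; exact eq_neg_of_add_eq_zero_right h
      rw [show -∑ k ∈ Finset.range r, (b k / b r) * f (n + k)
          = (-∑ k ∈ Finset.range r, b k * f (n + k)) / b r by
        rw [neg_div, Finset.sum_div]
        congr 1
        exact Finset.sum_congr rfl fun k _ => by ring]
      rw [eq_div_iff hbr]
      exact h2
    
  constructor
  · intro h
    have hz : ∀ n : ℕ, ∑ j, (Qp j).eval (n : ℂ) * lam j ^ n = 0 := fun n => by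
      rw [← bridge n]; exact (hiff n).mp (h n)
    have hQ0 : ∀ j, Qp j = 0 := indep lam hinj hne Qp hz
    apply Finset.prod_dvd_of_coprime
    · intro i _ j' _ hij
      exact ((pairwise_coprime_X_sub_C hinj hij).pow)
    · intro j _
      exact aop_dvd (lam j) (hne j) ((P j).natDegree) (P j) B (hP j) le_rfl (hQ0 j)
  · intro hdvd n
    rw [hiff n, bridge n]
    refine Finset.sum_eq_zero fun j _ => ?_
    have hd : (X - C (lam j)) ^ ((P j).natDegree + 1) ∣ B :=
      dvd_trans (Finset.dvd_prod_of_mem (fun k => (X - C (lam k)) ^ ((P k).natDegree + 1)) (Finset.mem_univ j)) hdvd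
    obtain ⟨c, hc⟩ := hd
    rw [hQp]
    simp only []
    rw [hc, mul_comm ((X - C (lam j)) ^ ((P j).natDegree + 1)) c, map_mul,
      Module.End.mul_apply, aop_kill _ _ _ le_rfl, map_zero,
      eval_zero, zero_mul]
end

section
/- If a sequence F of finite difference dimension d (with characteristic polynomial P of degree d) satisfies some LRF of order ρ with nonzero last coefficient, then the LRF given by the coefficients of P, namely f_{n+d} = −Σ_{k=0}^{d-1} p_k f_{n+k} where P(z) = z^d + p_{d-1}z^{d-1} + … + p_0, has the minimal order among all LRFs satisfied by F. -/
open Polynomial Finset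

noncomputable def Eop (l : ℂ) : Module.End ℂ (Polynomial ℂ) :=
  l • (Polynomial.taylor (1 : ℂ))

noncomputable def Lop (l : ℂ) (p : Polynomial ℂ) : Module.End ℂ (Polynomial ℂ) :=
  Polynomial.aeval (Eop l) p

lemma natroots (p : Polynomial ℂ) (h : ∀ n : ℕ, p.eval (n : ℂ) = 0) : p = 0 := by
  apply Polynomial.eq_zero_of_infinite_isRoot
  apply Set.infinite_of_injective_forall_mem (f := fun n : ℕ => (n : ℂ))
  · exact fun a b hab => Nat.cast_injective hab
  · exact fun n => h n

lemma Eop_pow_apply (l : ℂ) (j : ℕ) (Pp : Polynomial ℂ) :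
    ((Eop l) ^ j) Pp = l ^ j • Polynomial.taylor (j : ℂ) Pp := by
  induction j with
  | zero => simp [Polynomial.taylor_zero]
  | succ j ih =>
    rw [pow_succ', Module.End.mul_apply, ih, map_smul]
    have h1 : (Eop l) (Polynomial.taylor (j : ℂ) Pp)
        = l • Polynomial.taylor (1 : ℂ) (Polynomial.taylor (j : ℂ) Pp) := rfl
    rw [h1, Polynomial.taylor_taylor, smul_smul, ← pow_succ,
      show (((j + 1 : ℕ)) : ℂ) = 1 + (j : ℂ) by push_cast; ring]

lemma Lop_eval (l x : ℂ) (q Pp : Polynomial ℂ) (N : ℕ) (hN : q.natDegree < N) :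
    ((Lop l q) Pp).eval x = ∑ j ∈ Finset.range N, q.coeff j * l ^ j * Pp.eval (x + j) := by
  rw [Lop, Polynomial.aeval_eq_sum_range' hN, LinearMap.sum_apply, Polynomial.eval_finset_sum]
  refine Finset.sum_congr rfl fun j hj => ?_
  rw [LinearMap.smul_apply, Eop_pow_apply, smul_smul, Polynomial.smul_eq_C_mul,
    Polynomial.eval_mul, Polynomial.eval_C, Polynomial.taylor_eval]

lemma taylor_coeff_ge (r : ℂ) (Pp : Polynomial ℂ) (mm : ℕ) (h : Pp.natDegree ≤ mm) :
    (Polynomial.taylor r Pp).coeff mm = Pp.coeff mm := by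
  rcases lt_or_eq_of_le h with h | h
  · rw [Polynomial.coeff_eq_zero_of_natDegree_lt, Polynomial.coeff_eq_zero_of_natDegree_lt h]
    rwa [Polynomial.natDegree_taylor]
  · by_cases h0 : Pp = 0
    · simp [h0]
    · subst h
      have h1 : (Polynomial.taylor r Pp).coeff Pp.natDegree
          = (Polynomial.taylor r Pp).leadingCoeff := by
        rw [Polynomial.leadingCoeff, Polynomial.natDegree_taylor]
      rw [h1, Polynomial.taylor_apply,
        Polynomial.leadingCoeff_comp (by simp [Polynomial.natDegree_X_add_C])]
      rw [Polynomial.leadingCoeff_X_add_C, one_pow, mul_one]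
      rfl

lemma Lop_coeff_top (l : ℂ) (q Pp : Polynomial ℂ) :
    ((Lop l q) Pp).coeff Pp.natDegree = q.eval l * Pp.coeff Pp.natDegree := by
  rw [Lop, Polynomial.aeval_eq_sum_range' (Nat.lt_succ_self _), LinearMap.sum_apply,
    Polynomial.finset_sum_coeff, Polynomial.eval_eq_sum_range, Finset.sum_mul]
  refine Finset.sum_congr rfl fun j hj => ?_
  rw [LinearMap.smul_apply, Eop_pow_apply, smul_smul, Polynomial.coeff_smul,
    taylor_coeff_ge _ _ _ le_rfl, smul_eq_mul, mul_assoc]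

lemma delta_coeff_s4 (Pp : Polynomial ℂ) (h : 1 ≤ Pp.natDegree) :
    (Polynomial.taylor (1:ℂ) Pp - Pp).coeff (Pp.natDegree - 1)
      = (Pp.natDegree : ℂ) * Pp.leadingCoeff := by
  set m := Pp.natDegree with hm
  rw [Polynomial.coeff_sub, Polynomial.taylor_coeff]
  have hnd : (Polynomial.hasseDeriv (m-1) Pp).natDegree < 2 :=
    lt_of_le_of_lt (Polynomial.natDegree_hasseDeriv_le _ _) (by omega)
  rw [Polynomial.eval_eq_sum_range' hnd, Finset.sum_range_succ, Finset.sum_range_one]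
  simp only [Polynomial.hasseDeriv_coeff]
  have h1 : 1 + (m - 1) = m := by omega
  have h3 : m.choose (m-1) = m := by
    rw [Nat.choose_symm h, Nat.choose_one_right]
  rw [zero_add, h1, h3, Nat.choose_self, Polynomial.leadingCoeff, ← hm]
  push_cast
  ring

lemma delta_coeff_ge (Pp : Polynomial ℂ) (k : ℕ) (h : Pp.natDegree ≤ k) :
    (Polynomial.taylor (1:ℂ) Pp - Pp).coeff k = 0 := by
  rw [Polynomial.coeff_sub, taylor_coeff_ge _ _ _ h, sub_self]

lemma delta_natDegree_lt (Pp : Polynomial ℂ) (h : 1 ≤ Pp.natDegree) :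
    (Polynomial.taylor (1:ℂ) Pp - Pp) ≠ 0 ∧
      (Polynomial.taylor (1:ℂ) Pp - Pp).natDegree < Pp.natDegree ∧
      Pp.natDegree - 1 ≤ (Polynomial.taylor (1:ℂ) Pp - Pp).natDegree := by
  have hl : Pp.leadingCoeff ≠ 0 :=
    Polynomial.leadingCoeff_ne_zero.2 (fun hz => by simp [hz] at h)
  have hm : (Pp.natDegree : ℂ) ≠ 0 := Nat.cast_ne_zero.2 (by omega)
  have hc := delta_coeff_s4 Pp h
  have hcne : (Polynomial.taylor (1:ℂ) Pp - Pp).coeff (Pp.natDegree - 1) ≠ 0 := by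
    rw [hc]; exact mul_ne_zero hm hl
  have hne : Polynomial.taylor (1:ℂ) Pp - Pp ≠ 0 := fun h0 => by simp [h0] at hcne
  refine ⟨hne, ?_, Polynomial.le_natDegree_of_ne_zero hcne⟩
  by_contra hge
  push_neg at hge
  have h0 := delta_coeff_ge Pp _ hge
  exact (Polynomial.leadingCoeff_ne_zero.2 hne) h0

lemma Lop_X_sub_C_apply (l : ℂ) (Pp : Polynomial ℂ) :
    (Lop l (X - C l)) Pp = l • (Polynomial.taylor (1:ℂ) Pp - Pp) := by
  rw [Lop, map_sub, Polynomial.aeval_X, Polynomial.aeval_C, LinearMap.sub_apply,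
    Module.algebraMap_end_apply]
  have h1 : (Eop l) Pp = l • Polynomial.taylor (1 : ℂ) Pp := rfl
  rw [h1, smul_sub]

lemma Lop_vanish_aux (l : ℂ) :
    ∀ (N : ℕ) (Pp : Polynomial ℂ), Pp.natDegree ≤ N →
      ((Lop l (X - C l)) ^ (N + 1)) Pp = 0 := by
  intro N
  induction N with
  | zero =>
    intro Pp hPp
    rw [pow_one, Lop_X_sub_C_apply]
    have : Pp = C (Pp.coeff 0) := Polynomial.eq_C_of_natDegree_le_zero hPp
    rw [this, Polynomial.taylor_C, sub_self, smul_zero]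
  | succ N ih =>
    intro Pp hPp
    rw [pow_succ, Module.End.mul_apply, Lop_X_sub_C_apply, map_smul]
    by_cases h1 : 1 ≤ Pp.natDegree
    · obtain ⟨hne, hlt, -⟩ := delta_natDegree_lt Pp h1
      rw [ih _ (by omega), smul_zero]
    · have : Pp = C (Pp.coeff 0) := Polynomial.eq_C_of_natDegree_le_zero (by omega)
      rw [this, Polynomial.taylor_C, sub_self, map_zero, smul_zero]

lemma Lop_key (l : ℂ) (hl : l ≠ 0) :
    ∀ (N : ℕ) (Pp p : Polynomial ℂ), Pp.natDegree ≤ N → Pp ≠ 0 → (Lop l p) Pp = 0 →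
      (X - C l) ^ (Pp.natDegree + 1) ∣ p := by
  intro N
  induction N with
  | zero =>
    intro Pp p hPp hPne h0
    have hc := Lop_coeff_top l p Pp
    rw [h0, Polynomial.coeff_zero] at hc
    have hroot : p.eval l = 0 := by
      rcases mul_eq_zero.1 hc.symm with h | h
      · exact h
      · exact absurd h (Polynomial.leadingCoeff_ne_zero.2 hPne)
    have hz : Pp.natDegree = 0 := Nat.le_antisymm hPp (Nat.zero_le _)
    rw [hz, pow_one]
    exact Polynomial.dvd_iff_isRoot.2 hroot
  | succ N ih =>
    intro Pp p hPp hPne h0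
    have hc := Lop_coeff_top l p Pp
    rw [h0, Polynomial.coeff_zero] at hc
    have hroot : p.eval l = 0 := by
      rcases mul_eq_zero.1 hc.symm with h | h
      · exact h
      · exact absurd h (Polynomial.leadingCoeff_ne_zero.2 hPne)
    obtain ⟨p', hp'⟩ := Polynomial.dvd_iff_isRoot.2 hroot
    by_cases h1 : 1 ≤ Pp.natDegree
    · -- apply the operator factorization
      have hfac : (Lop l p) Pp = l • ((Lop l p') (Polynomial.taylor (1:ℂ) Pp - Pp)) := by
        rw [hp', mul_comm, Lop, map_mul, Module.End.mul_apply]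
        have : ((Polynomial.aeval (Eop l)) (X - C l)) Pp
            = l • (Polynomial.taylor (1:ℂ) Pp - Pp) := Lop_X_sub_C_apply l Pp
        rw [this, map_smul]
        rfl
      rw [hfac] at h0
      have h0' : (Lop l p') (Polynomial.taylor (1:ℂ) Pp - Pp) = 0 := by
        have := smul_eq_zero.1 h0
        tauto
      obtain ⟨hne, hlt, hge⟩ := delta_natDegree_lt Pp h1
      have hdvd := ih (Polynomial.taylor (1:ℂ) Pp - Pp) p' (by omega) hne h0'
      have hdvd2 : (X - C l) ^ Pp.natDegree ∣ p' :=
        dvd_trans (pow_dvd_pow _ (by omega)) hdvd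
      rw [hp', pow_succ']
      exact mul_dvd_mul_left _ hdvd2
    · have hz : Pp.natDegree = 0 := by omega
      rw [hz, pow_one]
      exact Polynomial.dvd_iff_isRoot.2 hroot

lemma swap_sum {m : ℕ} (lam : Fin m → ℂ) (s : Finset (Fin m)) (R : Fin m → Polynomial ℂ)
    (q : Polynomial ℂ) (N : ℕ) (hN : q.natDegree < N) (n : ℕ) :
    ∑ j ∈ Finset.range N, q.coeff j *
        (∑ k ∈ s, (R k).eval (((n + j : ℕ)) : ℂ) * lam k ^ (n + j))
      = ∑ k ∈ s, ((Lop (lam k) q) (R k)).eval (n : ℂ) * lam k ^ n := by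
  simp only [Finset.mul_sum]
  rw [Finset.sum_comm]
  refine Finset.sum_congr rfl fun k hk => ?_
  rw [Lop_eval (lam k) (n : ℂ) q (R k) N hN, Finset.sum_mul]
  refine Finset.sum_congr rfl fun j hj => ?_
  push_cast
  ring

lemma ind_lemma {m : ℕ} (lam : Fin m → ℂ) (hinj : Function.Injective lam)
    (hne : ∀ k, lam k ≠ 0) :
    ∀ (s : Finset (Fin m)) (R : Fin m → Polynomial ℂ),
      (∀ n : ℕ, ∑ k ∈ s, (R k).eval ((n : ℕ) : ℂ) * lam k ^ n = 0) → ∀ k ∈ s, R k = 0 := by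
  intro s
  induction s using Finset.strongInduction with
  | _ s ih =>
    intro R hsum k0 hk0
    set q : Polynomial ℂ := (X - C (lam k0)) ^ ((R k0).natDegree + 1) with hqdef
    have hq : ∀ n : ℕ, ∑ k ∈ s, ((Lop (lam k) q) (R k)).eval (n : ℂ) * lam k ^ n = 0 := by
      intro n
      rw [← swap_sum lam s R q (q.natDegree + 1) (Nat.lt_succ_self _) n]
      refine Finset.sum_eq_zero fun j hj => ?_
      rw [hsum (n + j), mul_zero]
    have hk0z : (Lop (lam k0) q) (R k0) = 0 := by
      rw [hqdef, Lop, map_pow]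
      exact Lop_vanish_aux (lam k0) ((R k0).natDegree) (R k0) le_rfl
    have herase : ∀ n : ℕ,
        ∑ k ∈ s.erase k0, ((Lop (lam k) q) (R k)).eval (n : ℂ) * lam k ^ n = 0 := by
      intro n
      have h := hq n
      rwa [← Finset.add_sum_erase s _ hk0, hk0z, Polynomial.eval_zero, zero_mul, zero_add] at h
    have h2 := ih (s.erase k0) (Finset.erase_ssubset hk0)
      (fun k => (Lop (lam k) q) (R k)) herase
    have hRk : ∀ k ∈ s.erase k0, R k = 0 := by
      intro k hk
      by_contra hR0
      have hdvd := Lop_key (lam k) (hne k) ((R k).natDegree) (R k) q le_rfl hR0 (h2 k hk)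
      have hx : (X - C (lam k)) ∣ q :=
        dvd_trans (dvd_pow_self _ (Nat.succ_ne_zero _)) hdvd
      have heval : q.eval (lam k) = 0 := by
        obtain ⟨w, hw⟩ := hx
        rw [hw]
        simp
      rw [hqdef] at heval
      simp only [Polynomial.eval_pow, Polynomial.eval_sub, Polynomial.eval_X,
        Polynomial.eval_C, pow_eq_zero_iff (Nat.succ_ne_zero _), sub_eq_zero] at heval
      exact (Finset.mem_erase.1 hk).1 (hinj heval)
    have hk0' : ∀ n : ℕ, (R k0).eval (n : ℂ) * lam k0 ^ n = 0 := by
      intro n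
      have h := hsum n
      rwa [← Finset.add_sum_erase s _ hk0,
        Finset.sum_eq_zero (fun k hk => by rw [hRk k hk, Polynomial.eval_zero, zero_mul]),
        add_zero] at h
    refine natroots _ fun n => ?_
    rcases mul_eq_zero.1 (hk0' n) with h | h
    · exact h
    · exact absurd h (pow_ne_zero _ (hne k0))

/-- If a sequence of finite difference dimension `d` (with characteristic
polynomial `Q` of degree `d`) satisfies some LRF with nonzero last coefficient,
then the LRF given by the coefficients of `Q` is satisfied by `f` and has minimal
order among all LRFs satisfied by `f`. -/
theorem charpoly_lrf_minimal_order
    (f : ℕ → ℂ) (m : ℕ) (lam : Fin m → ℂ) (P : Fin m → Polynomial ℂ)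
    (hinj : Function.Injective lam) (hne : ∀ k, lam k ≠ 0) (hP : ∀ k, P k ≠ 0)
    (hf : ∀ n : ℕ, f n = ∑ k, (P k).eval (n : ℂ) * lam k ^ n)
    (Q : Polynomial ℂ) (hQ : Q = ∏ k, (X - C (lam k)) ^ ((P k).natDegree + 1))
    (d : ℕ) (hd : d = Q.natDegree)
    (ρ : ℕ) (a : ℕ → ℂ) (ha : a 0 ≠ 0)
    (hlrf : ∀ n : ℕ, f (n + ρ) = ∑ k ∈ Finset.range ρ, a k * f (n + k)) :
    (∀ n : ℕ, f (n + d) = -∑ k ∈ Finset.range d, Q.coeff k * f (n + k)) ∧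
    (∀ (r : ℕ) (c : ℕ → ℂ),
      (∀ n : ℕ, f (n + r) = ∑ k ∈ Finset.range r, c k * f (n + k)) → d ≤ r) := by
  -- the claim: every annihilating polynomial is divisible by Q
  have claim : ∀ (p : Polynomial ℂ) (N : ℕ), p.natDegree < N →
      (∀ n : ℕ, ∑ j ∈ Finset.range N, p.coeff j * f (n + j) = 0) → Q ∣ p := by
    intro p N hN hann
    have h1 : ∀ n : ℕ, ∑ k : Fin m, ((Lop (lam k) p) (P k)).eval (n : ℂ) * lam k ^ n = 0 := by
      intro n
      rw [← swap_sum lam Finset.univ P p N hN n]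
      refine Eq.trans ?_ (hann n)
      exact Finset.sum_congr rfl fun j _ => by rw [← hf (n + j)]
    have h2 := ind_lemma lam hinj hne Finset.univ
      (fun k => (Lop (lam k) p) (P k)) h1
    have h3 : ∀ k : Fin m, (X - C (lam k)) ^ ((P k).natDegree + 1) ∣ p := by
      intro k
      exact Lop_key (lam k) (hne k) ((P k).natDegree) (P k) p le_rfl (hP k)
        (h2 k (Finset.mem_univ k))
    rw [hQ]
    refine Finset.prod_dvd_of_coprime ?_ (fun k _ => h3 k)
    intro i hi j hj hij
    exact (Polynomial.pairwise_coprime_X_sub_C hinj hij).pow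
  -- Q is monic
  have hmono : Q.Monic := by
    rw [hQ]
    exact monic_prod_of_monic _ _ fun k _ => (monic_X_sub_C _).pow _
  -- Q annihilates f
  have hQ0 : ∀ k : Fin m, (Lop (lam k) Q) (P k) = 0 := by
    intro k
    rw [hQ, ← Finset.mul_prod_erase Finset.univ _ (Finset.mem_univ k), mul_comm, Lop,
      map_mul, Module.End.mul_apply, map_pow]
    have : (((Polynomial.aeval (Eop (lam k))) (X - C (lam k))) ^ ((P k).natDegree + 1)) (P k)
        = 0 := Lop_vanish_aux (lam k) ((P k).natDegree) (P k) le_rfl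
    rw [this, map_zero]
  have hann : ∀ n : ℕ, ∑ j ∈ Finset.range (d + 1), Q.coeff j * f (n + j) = 0 := by
    intro n
    have hswap := swap_sum lam Finset.univ P Q (d + 1) (by omega) n
    have : ∑ j ∈ Finset.range (d + 1), Q.coeff j * f (n + j)
        = ∑ k : Fin m, ((Lop (lam k) Q) (P k)).eval (n : ℂ) * lam k ^ n := by
      rw [← hswap]
      exact Finset.sum_congr rfl fun j _ => by rw [hf (n + j)]
    rw [this]
    exact Finset.sum_eq_zero fun k _ => by rw [hQ0 k, Polynomial.eval_zero, zero_mul]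
  constructor
  · intro n
    have h := hann n
    rw [Finset.sum_range_succ] at h
    have hcd : Q.coeff d = 1 := by rw [hd]; exact hmono.coeff_natDegree
    rw [hcd, one_mul] at h
    exact eq_neg_of_add_eq_zero_right h
  · intro r c hc
    set p : Polynomial ℂ := X ^ r - ∑ k ∈ Finset.range r, C (c k) * X ^ k with hp
    have hcoeff : ∀ j, p.coeff j
        = (if j = r then 1 else 0) - (if j < r then c j else 0) := by
      intro j
      rw [hp, Polynomial.coeff_sub, Polynomial.coeff_X_pow, Polynomial.finset_sum_coeff]
      congr 1
      simp only [Polynomial.coeff_C_mul, Polynomial.coeff_X_pow, mul_ite, mul_one, mul_zero]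
      rw [Finset.sum_ite_eq (Finset.range r) j (fun k => c k)]
      simp [Finset.mem_range]
    have hpd : p.natDegree ≤ r := by
      rw [hp]
      refine le_trans (Polynomial.natDegree_sub_le _ _) (max_le (by simp) ?_)
      refine Polynomial.natDegree_sum_le_of_forall_le _ _ fun k hk => ?_
      refine le_trans (Polynomial.natDegree_C_mul_le _ _) ?_
      simp only [Polynomial.natDegree_X_pow]
      exact le_of_lt (Finset.mem_range.1 hk)
    have hp0 : p.coeff r = 1 := by
      rw [hcoeff r, if_pos rfl, if_neg (lt_irrefl r), sub_zero]
    have hpne : p ≠ 0 := fun h0 => by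
      rw [h0, Polynomial.coeff_zero] at hp0
      exact one_ne_zero hp0.symm
    have hannp : ∀ n : ℕ, ∑ j ∈ Finset.range (r + 1), p.coeff j * f (n + j) = 0 := by
      intro n
      rw [Finset.sum_range_succ, hp0, one_mul]
      have hterm : ∀ j ∈ Finset.range r, p.coeff j * f (n + j) = -(c j * f (n + j)) := by
        intro j hj
        have hjr : j < r := Finset.mem_range.1 hj
        rw [hcoeff j, if_neg (by omega), if_pos hjr]
        ring
      rw [Finset.sum_congr rfl hterm, Finset.sum_neg_distrib, hc n]
      ring
    have hdvd := claim p (r + 1) (by omega) hannp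
    have := Polynomial.natDegree_le_of_dvd hdvd hpne
    omega
end

section
/- Let F_N be a finite complex time series of difference dimension d with characteristic polynomial P(z) = p_d z^d + … + p_0 (p_d = 1), and let L satisfy d < L ≤ N − d + 1. Then the L − d columns of the L × (L−d) banded Toeplitz matrix 𝐏 whose j-th column is (0,…,0, p_0, p_1, …, p_d, 0, …, 0)^T (with p_0 in row j) form a basis of the relations space ℜ^{(L)}(F_N), the complex-conjugate of the orthogonal complement of the trajectory space. -/
open Polynomial Finset

namespace SSAProof

/-- shift operator on sequences -/
noncomputable def E : Module.End ℂ (ℕ → ℂ) := LinearMap.funLeft ℂ ℂ (fun n => n + 1)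

lemma E_pow_apply (t : ℕ) (g : ℕ → ℂ) (n : ℕ) : (E ^ t) g n = g (n + t) := by
  induction t generalizing n with
  | zero => simp
  | succ t ih =>
    rw [pow_succ']
    show (E * E ^ t) g n = _
    rw [Module.End.mul_apply]
    show ((E ^ t) g) (n + 1) = _
    rw [ih]
    congr 1
    omega

lemma aeval_E_apply (q : Polynomial ℂ) (M : ℕ) (h : q.natDegree < M) (g : ℕ → ℂ) (n : ℕ) :
    (aeval E q) g n = ∑ t ∈ range M, q.coeff t * g (n + t) := by
  rw [aeval_eq_sum_range' h]
  rw [LinearMap.sum_apply]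
  rw [Finset.sum_apply]
  refine Finset.sum_congr rfl fun t _ => ?_
  rw [LinearMap.smul_apply, Pi.smul_apply, smul_eq_mul, E_pow_apply]



lemma natDegree_compX1 (p : Polynomial ℂ) : (p.comp (X + C 1)).natDegree = p.natDegree := by
  rw [natDegree_comp, natDegree_X_add_C, mul_one]

lemma leadingCoeff_compX1 (p : Polynomial ℂ) : (p.comp (X + C 1)).leadingCoeff = p.leadingCoeff := by
  rcases eq_or_ne p 0 with rfl | hp
  · simp
  · rw [leadingCoeff_comp (by rw [natDegree_X_add_C]; exact one_ne_zero)]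
    simp [leadingCoeff_X_add_C, monic_X_add_C (1:ℂ)]
    rw [show (X + 1 : Polynomial ℂ) = X + C 1 by simp, (monic_X_add_C (1:ℂ)).leadingCoeff, one_pow, mul_one]

lemma coeff_compX1_natDegree (p : Polynomial ℂ) :
    (p.comp (X + C 1)).coeff p.natDegree = p.leadingCoeff := by
  conv_lhs => rw [← natDegree_compX1 p]
  rw [← leadingCoeff, leadingCoeff_compX1]

lemma natDegree_delta_lt (p : Polynomial ℂ) (hp : p.natDegree ≠ 0) :
    (p.comp (X + C 1) - p).natDegree < p.natDegree := by
  have hp0 : p ≠ 0 := fun h => hp (by simp [h])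
  have hc0 : p.comp (X + C 1) ≠ 0 := fun h => by
    have := natDegree_compX1 p; rw [h] at this; simp at this; omega
  have hdeg : (p.comp (X + C 1)).degree = p.degree := by
    rw [degree_eq_natDegree hc0, degree_eq_natDegree hp0, natDegree_compX1]
  have h := degree_sub_lt hdeg hc0 (by rw [leadingCoeff_compX1])
  rcases eq_or_ne (p.comp (X + C 1) - p) 0 with h0 | h0
  · rw [h0, natDegree_zero]; omega
  · have := natDegree_lt_natDegree h0 (by rwa [hdeg] at h)
    omega

lemma comp_eq_self (p : Polynomial ℂ) (h : p.comp (X + C 1) = p) : p = C (p.eval 0) := by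
  have heval : ∀ x : ℂ, p.eval (x + 1) = p.eval x := by
    intro x
    conv_rhs => rw [← h]
    simp [eval_comp]
  have hnat : ∀ n : ℕ, p.eval (n : ℂ) = p.eval 0 := by
    intro n
    induction n with
    | zero => simp
    | succ n ih => push_cast; rw [heval, ih]
  have hq : p - C (p.eval 0) = 0 := by
    apply Polynomial.eq_zero_of_infinite_isRoot
    apply Set.Infinite.mono (s := Set.range ((↑) : ℕ → ℂ))
    · rintro x ⟨n, rfl⟩
      simp [IsRoot, hnat]
    · exact Set.infinite_range_of_injective Nat.cast_injective
  have := sub_eq_zero.mp hq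
  exact this


lemma shift_step (lam : ℂ) (p : Polynomial ℂ) :
    aeval E (X - C lam) (fun n => p.eval (n : ℂ) * lam ^ n) =
      lam • (fun n : ℕ => (p.comp (X + C 1) - p).eval (n : ℂ) * lam ^ n) := by
  funext n
  rw [map_sub, aeval_X, aeval_C, LinearMap.sub_apply, Pi.sub_apply,
    Module.algebraMap_end_apply]
  have hE : E (fun n => p.eval (n:ℂ) * lam ^ n) n = p.eval ((n+1 : ℕ) : ℂ) * lam ^ (n+1) := rfl
  rw [hE]
  simp only [Pi.smul_apply, smul_eq_mul, eval_sub, eval_comp, eval_add, eval_X, eval_C]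
  push_cast
  ring

lemma annih (lam : ℂ) : ∀ (D : ℕ) (p : Polynomial ℂ), p.natDegree ≤ D →
    aeval E ((X - C lam) ^ (D + 1)) (fun n => p.eval (n : ℂ) * lam ^ n) = 0 := by
  intro D
  induction D with
  | zero =>
    intro p hp
    rw [pow_one, shift_step]
    have : p.comp (X + C 1) - p = 0 := by
      rw [eq_C_of_natDegree_eq_zero (Nat.le_zero.mp hp)]
      simp
    rw [this]
    have h2 : (fun n : ℕ => eval (n:ℂ) (0 : Polynomial ℂ) * lam ^ n) = 0 := by funext n; simp
    rw [h2, smul_zero]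
  | succ D ih =>
    intro p hp
    have hdelta : (p.comp (X + C 1) - p).natDegree ≤ D := by
      rcases eq_or_ne p.natDegree 0 with h0 | h0
      · rw [eq_C_of_natDegree_eq_zero h0]; simp
      · have := natDegree_delta_lt p h0
        omega
    rw [pow_succ, map_mul, Module.End.mul_apply, shift_step, map_smul, ih _ hdelta, smul_zero]


lemma deriv_natDegree (q : Polynomial ℂ) (h : q.natDegree ≠ 0) :
    derivative q ≠ 0 ∧ (derivative q).natDegree = q.natDegree - 1 := by
  have hq0 : q ≠ 0 := fun hh => h (by simp [hh])
  have hD : q.natDegree - 1 + 1 = q.natDegree := Nat.succ_pred_eq_of_pos (Nat.pos_of_ne_zero h)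
  have hcast : ((q.natDegree - 1 : ℕ) : ℂ) + 1 = (q.natDegree : ℂ) := by
    exact_mod_cast hD
  have hc : (derivative q).coeff (q.natDegree - 1) ≠ 0 := by
    rw [coeff_derivative, hD]
    apply mul_ne_zero
    · exact leadingCoeff_ne_zero.mpr hq0
    · rw [hcast]
      exact Nat.cast_ne_zero.mpr h
  refine ⟨fun hh => by simp [hh] at hc, le_antisymm (natDegree_derivative_le q)
    (le_natDegree_of_ne_zero hc)⟩

lemma vanish : ∀ (M : ℕ) {m : ℕ} (lam : Fin m → ℂ), Function.Injective lam →
    (∀ k, lam k ≠ 0) →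
    ∀ (R : Fin m → Polynomial ℂ),
    (∑ k, (if R k = 0 then 0 else (R k).natDegree + 1)) ≤ M + 1 →
    (∀ a : ℕ, a ≤ M → ∑ k, (R k).eval (a : ℂ) * lam k ^ a = 0) →
    ∀ k, R k = 0 := by
  intro M
  induction M with
  | zero =>
    intro m lam hinj hne R hdeg hvan k0
    by_contra hk0
    set w : Fin m → ℕ := fun j => if R j = 0 then 0 else (R j).natDegree + 1 with hwdef
    have hsplit : w k0 + ∑ j ∈ univ.erase k0, w j = ∑ j, w j :=
      Finset.add_sum_erase _ _ (mem_univ k0)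
    have hwk0 : 1 ≤ w k0 := by simp [hwdef, hk0]
    have hbridge : (∑ j, w j) = univ.sum w := rfl
    have hothers : ∀ j ∈ univ.erase k0, w j = 0 := by
      intro j hj
      have h1 : ∑ j ∈ univ.erase k0, w j = 0 := by omega
      exact (Finset.sum_eq_zero_iff.mp h1) j hj
    have hRj : ∀ j, j ≠ k0 → R j = 0 := by
      intro j hj
      have := hothers j (by simp [hj])
      by_contra hne0
      simp [hwdef, hne0] at this
    have hdeg0 : (R k0).natDegree = 0 := by
      have : w k0 ≤ 1 := by omega
      simp only [hwdef, if_neg hk0] at this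
      omega
    have h0 := hvan 0 le_rfl
    rw [Finset.sum_eq_single k0 (fun j _ hj => by rw [hRj j hj]; simp)
      (fun h => absurd (mem_univ k0) h)] at h0
    simp only [Nat.cast_zero, pow_zero, mul_one] at h0
    have := eq_C_of_natDegree_eq_zero hdeg0
    rw [coeff_zero_eq_eval_zero, h0] at this
    exact hk0 (by rw [this, map_zero])
  | succ M ih =>
    intro m lam hinj hne R hdeg hvan k
    by_cases hall : ∀ j, R j = 0
    · exact hall k
    push_neg at hall
    obtain ⟨k0, hk0⟩ := hall
    set R' : Fin m → Polynomial ℂ :=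
      fun j => C (lam j) * (R j).comp (X + C 1) - C (lam k0) * R j with hR'def
    have hvan' : ∀ a : ℕ, a ≤ M → ∑ j, (R' j).eval (a : ℂ) * lam j ^ a = 0 := by
      intro a ha
      have h1 := hvan (a + 1) (by omega)
      have h2 := hvan a (by omega)
      have hterm : ∀ j, (R' j).eval (a:ℂ) * lam j ^ a
          = (R j).eval ((a+1 : ℕ):ℂ) * lam j ^ (a+1) - lam k0 * ((R j).eval (a:ℂ) * lam j ^ a) := by
        intro j
        simp only [hR'def, eval_sub, eval_mul, eval_C, eval_comp, eval_add, eval_X]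
        push_cast
        ring
      rw [Finset.sum_congr rfl (fun j _ => hterm j), Finset.sum_sub_distrib, h1,
        ← Finset.mul_sum, h2]
      ring
    have hRd : ∀ j, (R' j).natDegree ≤ (R j).natDegree := by
      intro j
      refine (natDegree_sub_le _ _).trans (max_le ?_ ?_)
      · exact (natDegree_C_mul_le _ _).trans (by rw [natDegree_compX1])
      · exact natDegree_C_mul_le _ _
    set w : Fin m → ℕ := fun j => if R j = 0 then 0 else (R j).natDegree + 1 with hwdef
    set w' : Fin m → ℕ := fun j => if R' j = 0 then 0 else (R' j).natDegree + 1 with hw'def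
    have hw : ∀ j, w' j ≤ w j := by
      intro j
      rcases eq_or_ne (R j) 0 with h0 | h0
      · have : R' j = 0 := by simp [hR'def, h0]
        simp [hwdef, hw'def, h0, this]
      · rcases eq_or_ne (R' j) 0 with h1 | h1
        · simp [hw'def, h1]
        · simp only [hwdef, hw'def, if_neg h0, if_neg h1]
          have := hRd j
          omega
    have hk0w : w' k0 + 1 ≤ w k0 := by
      rcases eq_or_ne (R' k0) 0 with h1 | h1
      · simp [hw'def, hwdef, h1, hk0]
      · have hdnz : (R k0).natDegree ≠ 0 := by
          intro h0
          apply h1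
          have : R k0 = C ((R k0).coeff 0) := eq_C_of_natDegree_eq_zero h0
          rw [hR'def]
          simp only []
          rw [this, C_comp]
          ring
        have hlt : (R' k0).natDegree < (R k0).natDegree := by
          have heq : R' k0 = C (lam k0) * ((R k0).comp (X + C 1) - R k0) := by
            rw [hR'def]; ring
          calc (R' k0).natDegree ≤ ((R k0).comp (X + C 1) - R k0).natDegree := by
                rw [heq]; exact natDegree_C_mul_le _ _
            _ < (R k0).natDegree := natDegree_delta_lt _ hdnz
        simp only [hwdef, hw'def, if_neg h1, if_neg hk0]
        omega
    have hdeg' : ∑ j, w' j ≤ M + 1 := by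
      have hsplit : w k0 + ∑ j ∈ univ.erase k0, w j = ∑ j, w j :=
        Finset.add_sum_erase _ _ (mem_univ k0)
      have hsplit' : w' k0 + ∑ j ∈ univ.erase k0, w' j = ∑ j, w' j :=
        Finset.add_sum_erase _ _ (mem_univ k0)
      have hle : ∑ j ∈ univ.erase k0, w' j ≤ ∑ j ∈ univ.erase k0, w j :=
        Finset.sum_le_sum fun j _ => hw j
      have hbridge : (∑ j, w j) = univ.sum w := rfl
      have hbridge' : (∑ j, w' j) = univ.sum w' := rfl
      omega
    have hzero := ih lam hinj hne R' hdeg' hvan'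
    have hRj : ∀ j, j ≠ k0 → R j = 0 := by
      intro j hj
      by_contra hne0
      have h1 : C (lam j) * (R j).comp (X + C 1) = C (lam k0) * R j :=
        sub_eq_zero.mp (hzero j)
      have h2 := congrArg leadingCoeff h1
      rw [leadingCoeff_mul, leadingCoeff_mul, leadingCoeff_C, leadingCoeff_C,
        leadingCoeff_compX1] at h2
      have hlc : (R j).leadingCoeff ≠ 0 := leadingCoeff_ne_zero.mpr hne0
      have : lam j = lam k0 := mul_right_cancel₀ hlc h2
      exact hj (hinj this)
    have hk0' : R k0 = 0 := by
      have h1 : C (lam k0) * ((R k0).comp (X + C 1) - R k0) = 0 := by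
        have := hzero k0
        rw [hR'def] at this
        simp only [] at this
        rw [mul_sub]
        exact this
      have h2 : (R k0).comp (X + C 1) - R k0 = 0 := by
        rcases mul_eq_zero.mp h1 with h | h
        · exact absurd (C_eq_zero.mp h) (hne k0)
        · exact h
      have h3 := comp_eq_self (R k0) (sub_eq_zero.mp h2)
      have h0 := hvan 0 (by omega)
      rw [Finset.sum_eq_single k0 (fun j _ hj => by rw [hRj j hj]; simp)
        (fun h => absurd (mem_univ k0) h)] at h0
      simp only [Nat.cast_zero, pow_zero, mul_one] at h0
      rw [h3, h0, map_zero]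
    rcases eq_or_ne k k0 with rfl | hk
    · exact hk0'
    · exact hRj k hk

end SSAProof

/-- The span of the lagged vectors (trajectory space) of the first `N` values of
a sequence `f`, with window length `L`. -/
noncomputable def trajSpace (f : ℕ → ℂ) (N L : ℕ) : Submodule ℂ (Fin L → ℂ) :=
  Submodule.span ℂ {v : Fin L → ℂ | ∃ i : ℕ, i + L ≤ N ∧ v = fun j : Fin L => f (i + (j : ℕ))}

/-- The Hermitian inner product on `Fin L → ℂ`. -/
noncomputable def hinner {L : ℕ} (u v : Fin L → ℂ) : ℂ :=
  ∑ i, (starRingEnd ℂ) (u i) * v i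

/-- A vector belongs to the relations space of `f` iff its componentwise conjugate
is orthogonal to the trajectory space. -/
def inRelSpace (f : ℕ → ℂ) (N L : ℕ) (v : Fin L → ℂ) : Prop :=
  ∀ u ∈ trajSpace f N L, hinner u (fun i => (starRingEnd ℂ) (v i)) = 0

open SSAProof in
/-- For a time series of difference dimension `d` with (monic) characteristic
polynomial `Q`, and window length `d < L ≤ N - d + 1`, the `L - d` shifted-coefficient
columns of the banded Toeplitz matrix built from `Q` form a basis of the relations
space. -/
theorem banded_toeplitz_columns_basis_of_relations_space
    (f : ℕ → ℂ) (m : ℕ) (lam : Fin m → ℂ) (P : Fin m → Polynomial ℂ)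
    (hinj : Function.Injective lam) (hne : ∀ k, lam k ≠ 0) (hP : ∀ k, P k ≠ 0)
    (hf : ∀ n : ℕ, f n = ∑ k, (P k).eval (n : ℂ) * lam k ^ n)
    (Q : Polynomial ℂ) (hQ : Q = ∏ k, (X - C (lam k)) ^ ((P k).natDegree + 1))
    (d : ℕ) (hd : d = Q.natDegree)
    (N L : ℕ) (hdN : 2 * d ≤ N) (hdL : d < L) (hLN : L + d ≤ N + 1)
    (col : Fin (L - d) → (Fin L → ℂ))
    (hcol : ∀ (j : Fin (L - d)) (i : Fin L),
      col j i = if (j : ℕ) ≤ (i : ℕ) then Q.coeff ((i : ℕ) - (j : ℕ)) else 0) :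
    LinearIndependent ℂ col ∧
    (∀ j, inRelSpace f N L (col j)) ∧
    (∀ v : Fin L → ℂ, inRelSpace f N L v → v ∈ Submodule.span ℂ (Set.range col)) := by
  have hdsum : d = ∑ k, ((P k).natDegree + 1) := by
    rw [hd, hQ, natDegree_prod _ _ (fun k _ => pow_ne_zero _ (X_sub_C_ne_zero _))]
    refine Finset.sum_congr rfl fun k _ => ?_
    rw [natDegree_pow, natDegree_X_sub_C, mul_one]
  -- the fundamental recurrence
  have haeval : aeval E Q f = 0 := by
    have hfsum : (f : ℕ → ℂ) = ∑ k, (fun n : ℕ => (P k).eval (n:ℂ) * lam k ^ n) := by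
      funext n
      rw [hf]
      simp [Finset.sum_apply]
    rw [hfsum, map_sum]
    refine Finset.sum_eq_zero fun k _ => ?_
    have hfac : Q = (∏ k' ∈ univ.erase k, (X - C (lam k')) ^ ((P k').natDegree + 1)) *
        (X - C (lam k)) ^ ((P k).natDegree + 1) := by
      rw [hQ]
      exact ((Finset.mul_prod_erase _ _ (mem_univ k)).symm.trans (mul_comm _ _))
    rw [hfac, map_mul, Module.End.mul_apply, annih (lam k) _ (P k) le_rfl, map_zero]
  have hrec : ∀ n : ℕ, ∑ t ∈ range (d+1), Q.coeff t * f (n + t) = 0 := by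
    intro n
    rw [← aeval_E_apply Q (d+1) (by omega) f n, haeval]
    rfl
  -- characterization of the relations space
  have hrel : ∀ v : Fin L → ℂ, inRelSpace f N L v ↔
      ∀ a : ℕ, a + L ≤ N → ∑ i : Fin L, f (a + (i:ℕ)) * v i = 0 := by
    intro v
    constructor
    · intro h a ha
      have hu : (fun j : Fin L => f (a + (j:ℕ))) ∈ trajSpace f N L :=
        Submodule.subset_span ⟨a, ha, rfl⟩
      have h2 := h _ hu
      simp only [hinner] at h2
      refine (starRingEnd ℂ).injective ?_
      rw [map_sum, map_zero]
      simpa only [map_mul] using h2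
    · intro h u hu
      induction hu using Submodule.span_induction with
      | mem u hmem =>
        obtain ⟨a, ha, rfl⟩ := hmem
        simp only [hinner, ← map_mul, ← map_sum]
        rw [h a ha, map_zero]
      | zero => simp [hinner]
      | add x y hx hy ihx ihy =>
        simp only [hinner, Pi.add_apply, map_add, add_mul, Finset.sum_add_distrib] at ihx ihy ⊢
        rw [ihx, ihy, add_zero]
      | smul c x hx ihx =>
        simp only [hinner, Pi.smul_apply, smul_eq_mul, map_mul, mul_assoc,
          ← Finset.mul_sum] at ihx ⊢
        rw [ihx, mul_zero]
  have hQc0 : Q.coeff 0 ≠ 0 := by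
    rw [coeff_zero_eq_eval_zero, hQ, eval_prod]
    refine Finset.prod_ne_zero_iff.mpr fun k _ => ?_
    simp only [eval_pow, eval_sub, eval_X, eval_C, zero_sub]
    exact pow_ne_zero _ (neg_ne_zero.mpr (hne k))
  refine ⟨?_, ?_, ?_⟩
  · -- linear independence
    rw [Fintype.linearIndependent_iff]
    intro g hg
    have key : ∀ n : ℕ, ∀ j : Fin (L - d), (j : ℕ) ≤ n → g j = 0 := by
      intro n
      induction n using Nat.strong_induction_on with
      | _ n ihn =>
      intro j hj
      have hjL : (j : ℕ) < L := lt_of_lt_of_le j.isLt (Nat.sub_le L d)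
      have hrow := congrFun hg ⟨(j : ℕ), hjL⟩
      rw [Finset.sum_apply] at hrow
      rw [Finset.sum_eq_single j] at hrow
      · have hcc : col j ⟨(j:ℕ), hjL⟩ = Q.coeff 0 := by
          rw [hcol]
          simp
        rw [Pi.smul_apply, hcc, smul_eq_mul] at hrow
        exact (mul_eq_zero.mp hrow).resolve_right hQc0
      · intro j' _ hj'
        rcases lt_or_ge (j' : ℕ) (j : ℕ) with hlt | hge
        · have : g j' = 0 := by
            rcases Nat.lt_or_ge (j' : ℕ) n with h | h
            · exact ihn (j' : ℕ) (by omega) j' le_rfl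
            · omega
          rw [Pi.smul_apply, this, zero_smul]
        · have : (j' : ℕ) ≠ (j : ℕ) := fun hh => hj' (Fin.ext hh)
          have hcc : col j' ⟨(j:ℕ), hjL⟩ = 0 := by
            rw [hcol]
            exact if_neg (by simp; omega)
          rw [Pi.smul_apply, hcc, smul_zero]
      · intro h
        exact absurd (mem_univ j) h
    intro j
    exact key (j : ℕ) j le_rfl
  · -- columns are relations
    intro j
    rw [hrel]
    intro a ha
    have hjLd : (j : ℕ) < L - d := j.isLt
    calc ∑ i : Fin L, f (a + (i:ℕ)) * col j i
        = ∑ i ∈ range L, f (a + i) * (if (j:ℕ) ≤ i then Q.coeff (i - (j:ℕ)) else 0) := by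
          rw [← Fin.sum_univ_eq_sum_range (fun i => f (a + i) *
            (if (j:ℕ) ≤ i then Q.coeff (i - (j:ℕ)) else 0)) L]
          exact Finset.sum_congr rfl fun i _ => by rw [hcol]
      _ = ∑ t ∈ range (L - (j:ℕ)), f (a + (j:ℕ) + t) * Q.coeff t := by
          conv_lhs => rw [range_eq_Ico]
          rw [← Finset.sum_Ico_consecutive _ (Nat.zero_le (j:ℕ))
            (by omega : (j:ℕ) ≤ L)]
          have h1 : ∑ i ∈ Ico 0 (j:ℕ), f (a + i) *
              (if (j:ℕ) ≤ i then Q.coeff (i - (j:ℕ)) else 0) = 0 := by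
            refine Finset.sum_eq_zero fun i hi => ?_
            rw [Finset.mem_Ico] at hi
            rw [if_neg (by omega), mul_zero]
          rw [h1, zero_add, Finset.sum_Ico_eq_sum_range]
          refine Finset.sum_congr rfl fun t _ => ?_
          rw [if_pos (Nat.le_add_right _ _), Nat.add_sub_cancel_left, ← Nat.add_assoc]
      _ = ∑ t ∈ range (d+1), f (a + (j:ℕ) + t) * Q.coeff t := by
          refine (Finset.sum_subset ?_ ?_).symm
          · exact Finset.range_subset_range.mpr (by omega)
          · intro t _ ht
            rw [Finset.mem_range, not_lt] at ht
            rw [coeff_eq_zero_of_natDegree_lt (by omega : Q.natDegree < t), mul_zero]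
      _ = 0 := by
          rw [← hrec (a + (j:ℕ))]
          exact Finset.sum_congr rfl fun t _ => mul_comm _ _
  · -- spanning
    intro v hv
    rw [hrel] at hv
    have hQmonic : Q.Monic := by
      rw [hQ]; exact monic_prod_of_monic _ _ fun k _ => (monic_X_sub_C _).pow _
    have hQ0 : Q ≠ 0 := hQmonic.ne_zero
    set V : Polynomial ℂ := ∑ i : Fin L, C (v i) * X ^ (i:ℕ) with hVdef
    have hVcoeff : ∀ i : Fin L, V.coeff (i:ℕ) = v i := by
      intro i
      rw [hVdef, finset_sum_coeff]
      rw [Finset.sum_eq_single i]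
      · rw [coeff_C_mul, coeff_X_pow, if_pos rfl, mul_one]
      · intro i' _ hi'
        rw [coeff_C_mul, coeff_X_pow, if_neg (fun hh => hi' (Fin.ext hh.symm)), mul_zero]
      · exact fun h => absurd (mem_univ i) h
    have hVdeg : V.natDegree < L := by
      have : V.natDegree ≤ L - 1 :=
        natDegree_sum_le_of_forall_le _ _ fun i _ =>
          (natDegree_C_mul_le _ _).trans (by rw [natDegree_X_pow]; omega)
      omega
    have hQdvd : Q ∣ V := by
      rw [hQ]
      refine Finset.prod_dvd_of_coprime ?_ ?_
      · intro k _ k' _ hkk'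
        exact ((pairwise_coprime_X_sub_C hinj) hkk').pow
      intro k _
      -- since `Fin m` is inhabited here, `d ≥ 1` and `L ≤ N`
      have hd1 : 1 ≤ d := by
        rw [hdsum]
        calc 1 ≤ (P k).natDegree + 1 := by omega
          _ ≤ ∑ k', ((P k').natDegree + 1) :=
            Finset.single_le_sum (f := fun k' => (P k').natDegree + 1)
              (fun j _ => Nat.zero_le _) (mem_univ k)
      have hLN' : L ≤ N := by omega
      -- the "polynomial coefficient" family
      set R : Fin m → Polynomial ℂ :=
        fun k' => ∑ i : Fin L, C (v i * lam k' ^ (i:ℕ)) * (P k').comp (X + C ((i:ℕ):ℂ))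
        with hRdef
      have hRdeg : ∀ k', (R k').natDegree ≤ (P k').natDegree := by
        intro k'
        refine natDegree_sum_le_of_forall_le _ _ fun i _ => ?_
        refine (natDegree_C_mul_le _ _).trans ?_
        rw [natDegree_comp, natDegree_X_add_C, mul_one]
      have hRzero : ∀ k', R k' = 0 := by
        refine vanish (N - L) lam hinj hne R ?_ ?_
        · calc ∑ k', (if R k' = 0 then 0 else (R k').natDegree + 1)
              ≤ ∑ k', ((P k').natDegree + 1) := by
                refine Finset.sum_le_sum fun k' _ => ?_
                split
                · omega
                · have := hRdeg k'; omega
            _ = d := hdsum.symm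
            _ ≤ N - L + 1 := by omega
        · intro a ha
          have hswap : ∑ k', (R k').eval (a:ℂ) * lam k' ^ a
              = ∑ i : Fin L, f (a + (i:ℕ)) * v i := by
            have h1 : ∀ k', (R k').eval (a:ℂ) * lam k' ^ a
                = ∑ i : Fin L, (P k').eval (((a + (i:ℕ) : ℕ)):ℂ) * lam k' ^ (a + (i:ℕ)) * v i := by
              intro k'
              rw [hRdef]
              simp only [eval_finset_sum, eval_mul, eval_C, eval_comp, eval_add, eval_X]
              rw [Finset.sum_mul]
              refine Finset.sum_congr rfl fun i _ => ?_
              rw [pow_add]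
              push_cast
              ring
            rw [Finset.sum_congr rfl fun k' _ => h1 k', Finset.sum_comm]
            refine Finset.sum_congr rfl fun i _ => ?_
            rw [hf (a + (i:ℕ)), Finset.sum_mul]
          rw [hswap, hv a (by omega)]
      -- the averaging operator
      set S : Polynomial ℂ → Polynomial ℂ :=
        fun p => ∑ i : Fin L, C (v i * lam k ^ (i:ℕ)) * p.comp (X + C ((i:ℕ):ℂ)) with hSdef
      have hSderiv : ∀ p, derivative (S p) = S (derivative p) := by
        intro p
        rw [hSdef]
        simp only [derivative_sum, derivative_C_mul, derivative_comp, derivative_X_add_C, one_mul]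
      have hSiter : ∀ s : ℕ, S (derivative^[s] (P k)) = 0 := by
        intro s
        induction s with
        | zero => exact hRzero k
        | succ s ih =>
          rw [Function.iterate_succ_apply', ← hSderiv, ih, derivative_zero]
      have hiterdeg : ∀ s : ℕ, s ≤ (P k).natDegree →
          derivative^[s] (P k) ≠ 0 ∧ (derivative^[s] (P k)).natDegree = (P k).natDegree - s := by
        intro s
        induction s with
        | zero => exact fun _ => ⟨hP k, by simp⟩
        | succ s ih =>
          intro hs
          obtain ⟨h0, hdeg0⟩ := ih (by omega)
          have hnd : (derivative^[s] (P k)).natDegree ≠ 0 := by omega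
          obtain ⟨h1, h2⟩ := deriv_natDegree _ hnd
          rw [Function.iterate_succ_apply']
          exact ⟨h1, by omega⟩
      have hSX : ∀ s : ℕ, s ≤ (P k).natDegree → S (X ^ s) = 0 := by
        intro s
        induction s using Nat.strong_induction_on with
        | _ s ihs =>
        intro hs
        obtain ⟨hq0, hqdeg⟩ := hiterdeg ((P k).natDegree - s) (by omega)
        set q := derivative^[(P k).natDegree - s] (P k) with hqdef
        have hqdeg' : q.natDegree = s := by omega
        have hqsum : q = ∑ t ∈ range (s+1), C (q.coeff t) * X ^ t := by
          conv_lhs => rw [as_sum_range' q (s+1) (by omega)]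
          exact Finset.sum_congr rfl fun t _ => (C_mul_X_pow_eq_monomial).symm
        have hSq : S q = ∑ t ∈ range (s+1), C (q.coeff t) * S (X ^ t) := by
          conv_lhs => rw [hqsum]
          simp only [hSdef, Polynomial.sum_comp, mul_comp, C_comp, X_pow_comp, Finset.mul_sum]
          rw [Finset.sum_comm]
          exact Finset.sum_congr rfl fun t _ => Finset.sum_congr rfl fun i _ => by ring
        have hq0' := hSiter ((P k).natDegree - s)
        rw [← hqdef] at hq0'
        rw [hq0', Finset.sum_range_succ] at hSq
        have hprev : ∑ t ∈ range s, C (q.coeff t) * S (X ^ t) = 0 :=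
          Finset.sum_eq_zero fun t ht => by
            have ht' := mem_range.mp ht
            rw [ihs t ht' (le_of_lt (lt_of_lt_of_le ht' hs)), mul_zero]
        rw [hprev, zero_add] at hSq
        have hlc : q.coeff s ≠ 0 := by
          rw [← hqdeg']
          exact leadingCoeff_ne_zero.mpr hq0
        rcases mul_eq_zero.mp hSq.symm with h | h
        · exact absurd (C_eq_zero.mp h) hlc
        · exact h
      have hmom : ∀ s : ℕ, s ≤ (P k).natDegree →
          ∑ i : Fin L, v i * lam k ^ (i:ℕ) * ((i:ℕ):ℂ) ^ s = 0 := by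
        intro s hs
        have h0 := congrArg (fun p => p.eval 0) (hSX s hs)
        simp only [hSdef, eval_finset_sum, eval_mul, eval_C, X_pow_comp, eval_pow, eval_add,
          eval_X, eval_zero, zero_add] at h0
        exact h0
      have hpoly : ∀ q : Polynomial ℂ, q.natDegree ≤ (P k).natDegree →
          ∑ i : Fin L, v i * lam k ^ (i:ℕ) * q.eval ((i:ℕ):ℂ) = 0 := by
        intro q hq
        set D := (P k).natDegree
        have hq' : ∀ x : ℂ, q.eval x = ∑ t ∈ range (D+1), q.coeff t * x ^ t := by
          intro x
          conv_lhs => rw [as_sum_range' q (D+1) (by omega)]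
          rw [eval_finset_sum]
          exact Finset.sum_congr rfl fun t _ => by rw [eval_monomial]
        calc ∑ i : Fin L, v i * lam k ^ (i:ℕ) * q.eval ((i:ℕ):ℂ)
            = ∑ i : Fin L, ∑ t ∈ range (D+1),
                q.coeff t * (v i * lam k ^ (i:ℕ) * ((i:ℕ):ℂ) ^ t) := by
              refine Finset.sum_congr rfl fun i _ => ?_
              rw [hq', Finset.mul_sum]
              exact Finset.sum_congr rfl fun t _ => by ring
          _ = ∑ t ∈ range (D+1), q.coeff t *
                ∑ i : Fin L, v i * lam k ^ (i:ℕ) * ((i:ℕ):ℂ) ^ t := by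
              rw [Finset.sum_comm]
              exact Finset.sum_congr rfl fun t _ => by rw [Finset.mul_sum]
          _ = 0 := Finset.sum_eq_zero fun t ht =>
              by rw [hmom t (Nat.lt_succ_iff.mp (mem_range.mp ht)), mul_zero]
      have hderivroot : ∀ s : ℕ, s ≤ (P k).natDegree → (derivative^[s] V).IsRoot (lam k) := by
        intro s hs
        have hiterV : derivative^[s] V =
            ∑ i : Fin L, C (v i) * (C ((i:ℕ).descFactorial s : ℂ) * X ^ ((i:ℕ) - s)) := by
          rw [hVdef, iterate_derivative_sum]
          refine Finset.sum_congr rfl fun i _ => ?_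
          rw [iterate_derivative_C_mul, iterate_derivative_X_pow_eq_C_mul]
        have hkey : (derivative^[s] V).eval (lam k) * lam k ^ s
            = ∑ i : Fin L, v i * lam k ^ (i:ℕ) * (descPochhammer ℂ s).eval ((i:ℕ):ℂ) := by
          rw [hiterV, eval_finset_sum, Finset.sum_mul]
          refine Finset.sum_congr rfl fun i _ => ?_
          rw [descPochhammer_eval_eq_descFactorial]
          simp only [eval_mul, eval_C, eval_pow, eval_X]
          rcases le_or_gt s (i:ℕ) with hsi | hsi
          · rw [mul_assoc, mul_assoc, ← pow_add, Nat.sub_add_cancel hsi]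
            ring
          · rw [Nat.descFactorial_eq_zero_iff_lt.mpr hsi]
            simp
        have h0 : (derivative^[s] V).eval (lam k) * lam k ^ s = 0 := by
          rw [hkey]
          exact hpoly _ (by rw [descPochhammer_natDegree]; omega)
        have := mul_eq_zero.mp h0
        rcases this with h | h
        · exact h
        · exact absurd h (pow_ne_zero _ (hne k))
      rcases eq_or_ne V 0 with hV0 | hV0
      · rw [hV0]; exact dvd_zero _
      have hmult : (P k).natDegree < V.rootMultiplicity (lam k) :=
        lt_rootMultiplicity_of_isRoot_iterate_derivative hV0
          (fun s hs => hderivroot s hs)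
      exact dvd_trans (pow_dvd_pow _ hmult) (V.pow_rootMultiplicity_dvd (lam k))
    obtain ⟨W, hW⟩ := hQdvd
    have hWsmall : W.natDegree < L - d := by
      rcases eq_or_ne W 0 with rfl | hW0
      · rw [natDegree_zero]; omega
      · have hV0 : V ≠ 0 := by rw [hW]; exact mul_ne_zero hQ0 hW0
        have h1 : V.natDegree = d + W.natDegree := by rw [hW, natDegree_mul hQ0 hW0, hd]
        omega
    have hvrep : v = ∑ j : Fin (L - d), W.coeff (j:ℕ) • col j := by
      funext i
      rw [Finset.sum_apply]
      have h1 : v i = V.coeff (i:ℕ) := (hVcoeff i).symm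
      rw [h1, hW, mul_comm, coeff_mul,
        Finset.Nat.sum_antidiagonal_eq_sum_range_succ (fun a b => W.coeff a * Q.coeff b) (i:ℕ)]
      simp only [Nat.succ_eq_add_one]
      have hstep : ∀ j : Fin (L - d), (W.coeff (j:ℕ) • col j) i
          = W.coeff (j:ℕ) * (if (j:ℕ) ≤ (i:ℕ) then Q.coeff ((i:ℕ) - (j:ℕ)) else 0) := by
        intro j
        rw [Pi.smul_apply, smul_eq_mul, hcol]
      rw [Finset.sum_congr rfl fun j _ => hstep j]
      rw [Fin.sum_univ_eq_sum_range
        (fun t => W.coeff t * (if t ≤ (i:ℕ) then Q.coeff ((i:ℕ) - t) else 0)) (L - d)]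
      have hbig1 : ∑ t ∈ range ((i:ℕ)+1), W.coeff t * Q.coeff ((i:ℕ) - t)
          = ∑ t ∈ range L, W.coeff t * (if t ≤ (i:ℕ) then Q.coeff ((i:ℕ) - t) else 0) := by
        have hbig0 : ∑ t ∈ range ((i:ℕ)+1), W.coeff t * Q.coeff ((i:ℕ) - t)
            = ∑ t ∈ range ((i:ℕ)+1), W.coeff t *
                (if t ≤ (i:ℕ) then Q.coeff ((i:ℕ) - t) else 0) :=
          Finset.sum_congr rfl fun t ht => by
            rw [if_pos (Nat.lt_succ_iff.mp (mem_range.mp ht))]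
        rw [hbig0]
        refine Finset.sum_subset (Finset.range_subset_range.mpr (by have := i.isLt; omega)) ?_
        intro t _ ht
        rw [mem_range, Nat.lt_succ_iff, not_le] at ht
        rw [if_neg (by omega), mul_zero]
      have hbig2 : ∑ t ∈ range (L - d), W.coeff t * (if t ≤ (i:ℕ) then Q.coeff ((i:ℕ) - t) else 0)
          = ∑ t ∈ range L, W.coeff t * (if t ≤ (i:ℕ) then Q.coeff ((i:ℕ) - t) else 0) := by
        refine Finset.sum_subset (Finset.range_subset_range.mpr (by omega)) ?_
        intro t _ ht
        rw [mem_range, not_lt] at ht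
        rw [coeff_eq_zero_of_natDegree_lt (by omega : W.natDegree < t), zero_mul]
      rw [hbig1, ← hbig2]
    rw [hvrep]
    exact Submodule.sum_mem _ fun j _ =>
      Submodule.smul_mem _ _ (Submodule.subset_span ⟨j, rfl⟩)
end

section
/- Let F_N be a time series of difference dimension d with distinct signal roots λ_1,…,λ_m of multiplicities ν_1,…,ν_m, and d < L ≤ N−d+1. Then the d vectors ℓ^k_L(λ_j) = (∂^k/∂λ^k)(1, λ, λ², …, λ^{L-1})^T evaluated at λ = λ_j, for 1 ≤ j ≤ m and 0 ≤ k < ν_j, form a basis of the trajectory space 𝔏^{(L)}(F_N). -/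
open Polynomial Finset

/-- The vector `ℓ^k_L(λ)`: componentwise `k`-th derivative in `λ` of
`(1, λ, λ², …, λ^{L-1})`. -/
noncomputable def ellVec (L : ℕ) (k : ℕ) (lam : ℂ) : Fin L → ℂ :=
  fun i => (Polynomial.derivative^[k] ((X : Polynomial ℂ) ^ (i : ℕ))).eval lam

/-! ### Auxiliary machinery: shift operator on sequences -/

/-- Shift operator on sequences. -/
noncomputable def shiftE : Module.End ℂ (ℕ → ℂ) :=
  { toFun := fun u n => u (n+1), map_add' := by intros; rfl, map_smul' := by intros; rfl }

lemma shiftE_pow (t : ℕ) (u : ℕ → ℂ) (n : ℕ) : (shiftE ^ t) u n = u (n + t) := by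
  induction t generalizing u n with
  | zero => rfl
  | succ s ih =>
      rw [pow_succ]
      show (shiftE ^ s) (shiftE u) n = _
      rw [ih]
      show u (n + s + 1) = u (n + (s+1))
      ring_nf

lemma aeval_shift_apply {R : Polynomial ℂ} {M : ℕ} (hM : R.natDegree < M) (u : ℕ → ℂ) (n : ℕ) :
    (aeval shiftE R) u n = ∑ t ∈ range M, R.coeff t * u (n + t) := by
  rw [Polynomial.aeval_eq_sum_range' hM]
  have : ((∑ i ∈ range M, R.coeff i • shiftE ^ i) u) n
      = ∑ i ∈ range M, (R.coeff i • (shiftE ^ i) u) n := by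
    rw [LinearMap.sum_apply]
    simp [Finset.sum_apply]
  rw [this]
  exact Finset.sum_congr rfl fun t _ => by simp [shiftE_pow]

/-- The sequence `n ↦ Q(n) a^n`. -/
noncomputable def eseq (Q : Polynomial ℂ) (a : ℂ) : ℕ → ℂ := fun n => Q.eval (n:ℂ) * a ^ n

lemma eseq_zero_poly (a : ℂ) : eseq 0 a = 0 := by funext n; simp [eseq]

/-- One application of `S - μ` to an exponential polynomial sequence. -/
noncomputable def stepP (mu a : ℂ) (Q : Polynomial ℂ) : Polynomial ℂ :=
  a • Q.comp (X + 1) - mu • Q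

lemma eval_comp_X_add_one (Q : Polynomial ℂ) (x : ℂ) :
    (Q.comp (X + 1)).eval x = Q.eval (x + 1) := by
  simp [eval_comp]

lemma step_eseq (mu a : ℂ) (Q : Polynomial ℂ) :
    (aeval shiftE (X - C mu)) (eseq Q a) = eseq (stepP mu a Q) a := by
  funext n
  have h1 : (aeval shiftE (X - C mu)) (eseq Q a) n
      = eseq Q a (n+1) - mu * eseq Q a n := by
    rw [map_sub, aeval_X, aeval_C]
    rfl
  rw [h1]
  simp only [eseq, stepP, eval_sub, eval_smul, smul_eq_mul, eval_comp_X_add_one]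
  push_cast
  ring

lemma stepIter (mu a : ℂ) (Q : Polynomial ℂ) (s : ℕ) :
    (aeval shiftE ((X - C mu) ^ s)) (eseq Q a) = eseq ((stepP mu a)^[s] Q) a := by
  induction s generalizing Q with
  | zero => simp
  | succ s ih =>
      rw [pow_succ, map_mul, Module.End.mul_apply, step_eseq, ih,
        Function.iterate_succ_apply]

lemma stepP_zero (mu a : ℂ) : stepP mu a 0 = 0 := by simp [stepP]

lemma delta_natDegree_lt_s7 {Q : Polynomial ℂ} (hQ : 1 ≤ Q.natDegree) :
    (Q.comp (X + 1) - Q).natDegree < Q.natDegree := by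
  have hQ0 : Q ≠ 0 := fun h => by simp [h] at hQ
  have hcomp : Q.comp (X + 1) = taylor 1 Q := by
    rw [taylor_apply, C_1]
  have hnd : (Q.comp (X + 1)).natDegree = Q.natDegree := by
    rw [hcomp, natDegree_taylor]
  have hc0 : Q.comp (X + 1) ≠ 0 := fun h => by
    rw [h, natDegree_zero] at hnd; omega
  have hlead : (Q.comp (X + 1)).leadingCoeff = Q.leadingCoeff := by
    have h1 : ((X + 1 : Polynomial ℂ)).natDegree ≠ 0 := by
      have : (X + 1 : Polynomial ℂ) = X + C 1 := by rw [C_1]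
      rw [this, natDegree_X_add_C]; omega
    rw [leadingCoeff_comp h1]
    have : (X + 1 : Polynomial ℂ).leadingCoeff = 1 := by
      have : (X + 1 : Polynomial ℂ) = X + C 1 := by rw [C_1]
      rw [this]; exact (monic_X_add_C 1).leadingCoeff
    rw [this, one_pow, mul_one]
  have hdeg : (Q.comp (X + 1)).degree = Q.degree := by
    rw [degree_eq_natDegree hc0, degree_eq_natDegree hQ0, hnd]
  have h := degree_sub_lt hdeg hc0 hlead
  rcases eq_or_ne (Q.comp (X + 1) - Q) 0 with h0 | h0
  · rw [h0, natDegree_zero]; omega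
  · exact natDegree_lt_natDegree h0 (by rwa [hdeg] at h)

lemma stepP_self_natDegree_lt {Q : Polynomial ℂ} (mu : ℂ) (hQ : 1 ≤ Q.natDegree) :
    (stepP mu mu Q).natDegree < Q.natDegree := by
  have : stepP mu mu Q = mu • (Q.comp (X + 1) - Q) := by
    rw [stepP, smul_sub]
  rw [this]
  exact lt_of_le_of_lt (natDegree_smul_le _ _) (delta_natDegree_lt_s7 hQ)

lemma stepP_iter_zero {Q : Polynomial ℂ} (mu : ℂ) {s : ℕ} (hQ : Q.natDegree < s) :
    (stepP mu mu)^[s] Q = 0 := by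
  induction s generalizing Q with
  | zero => omega
  | succ s ih =>
      rw [Function.iterate_succ_apply]
      rcases Nat.eq_zero_or_pos Q.natDegree with h0 | h1
      · have : stepP mu mu Q = 0 := by
          have hc : Q = C (Q.coeff 0) := eq_C_of_natDegree_eq_zero h0
          rw [stepP, hc, C_comp, sub_self]
        rw [this, Function.iterate_fixed (stepP_zero mu mu)]
      · exact ih (lt_of_lt_of_le (stepP_self_natDegree_lt mu h1) (by omega))

lemma annihilate {Q : Polynomial ℂ} (mu : ℂ) {s : ℕ} (hQ : Q.natDegree < s) :
    (aeval shiftE ((X - C mu) ^ s)) (eseq Q mu) = 0 := by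
  rw [stepIter, stepP_iter_zero mu hQ, eseq_zero_poly]

lemma annihilate_dvd {Q R : Polynomial ℂ} (mu : ℂ) {s : ℕ}
    (hdvd : (X - C mu) ^ s ∣ R) (hQ : Q.natDegree < s) :
    (aeval shiftE R) (eseq Q mu) = 0 := by
  obtain ⟨T, hT⟩ := hdvd
  rw [hT, mul_comm, map_mul, Module.End.mul_apply, annihilate mu hQ, map_zero]

lemma poly_zero_of_nat_eval {Q : Polynomial ℂ} (h : ∀ n : ℕ, Q.eval (n:ℂ) = 0) : Q = 0 := by
  apply Polynomial.eq_zero_of_infinite_isRoot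
  apply Set.Infinite.mono (s := Set.range (fun n : ℕ => (n:ℂ)))
  · rintro x ⟨n, rfl⟩; exact h n
  · exact Set.infinite_range_of_injective Nat.cast_injective

lemma eseq_eq_zero {Q : Polynomial ℂ} {a : ℂ} (ha : a ≠ 0) (h : eseq Q a = 0) : Q = 0 := by
  apply poly_zero_of_nat_eval
  intro n
  have := congrFun h n
  simp only [eseq, Pi.zero_apply] at this
  exact (mul_eq_zero.mp this).resolve_right (pow_ne_zero n ha)

lemma aeval_eseq (e Q : Polynomial ℂ) (a : ℂ) :
    (aeval shiftE e) (eseq Q a)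
      = eseq (∑ t ∈ range (e.natDegree + 1), (e.coeff t * a ^ t) • Q.comp (X + C (t:ℂ))) a := by
  funext n
  rw [aeval_shift_apply (Nat.lt_succ_self _)]
  simp only [eseq, eval_finset_sum, eval_smul, smul_eq_mul, Finset.sum_mul, eval_comp,
    eval_add, eval_X, eval_C]
  refine Finset.sum_congr rfl fun t _ => ?_
  push_cast
  ring

lemma cop_coeff (e Q : Polynomial ℂ) (a : ℂ) :
    (∑ t ∈ range (e.natDegree + 1), (e.coeff t * a ^ t) • Q.comp (X + C (t:ℂ))).coeff Q.natDegree
      = e.eval a * Q.leadingCoeff := by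
  rw [finset_sum_coeff]
  have key : ∀ t : ℕ, (Q.comp (X + C (t:ℂ))).coeff Q.natDegree = Q.leadingCoeff := by
    intro t
    have h1 : Q.comp (X + C (t:ℂ)) = taylor (t:ℂ) Q := (taylor_apply _ _).symm
    have hnd : (Q.comp (X + C (t:ℂ))).natDegree = Q.natDegree := by rw [h1, natDegree_taylor]
    have : (Q.comp (X + C (t:ℂ))).coeff Q.natDegree
        = (Q.comp (X + C (t:ℂ))).leadingCoeff := by rw [← hnd, coeff_natDegree]
    rw [this, leadingCoeff_comp (by rw [natDegree_X_add_C]; omega)]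
    rw [(monic_X_add_C ((t:ℕ):ℂ)).leadingCoeff, one_pow, mul_one]
  calc ∑ t ∈ range (e.natDegree + 1), ((e.coeff t * a ^ t) • Q.comp (X + C (t:ℂ))).coeff Q.natDegree
      = ∑ t ∈ range (e.natDegree + 1), e.coeff t * a ^ t * Q.leadingCoeff := by
        refine Finset.sum_congr rfl fun t _ => ?_
        rw [coeff_smul, key t, smul_eq_mul]
    _ = e.eval a * Q.leadingCoeff := by rw [← Finset.sum_mul, ← eval_eq_sum_range]

lemma coeff_comp_X_add_one (Q : Polynomial ℂ) (m : ℕ) :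
    (Q.comp (X + 1)).coeff m = ∑ k ∈ range (Q.natDegree + 1), Q.coeff k * (k.choose m) := by
  rw [comp_eq_sum_left,
    Polynomial.sum_over_range (p := Q) (f := fun e a => C a * (X+1)^e) (by intro n; simp),
    finset_sum_coeff]
  refine Finset.sum_congr rfl fun k _ => ?_
  rw [coeff_C_mul, coeff_X_add_one_pow]

lemma delta_coeff_pred {Q : Polynomial ℂ} (hQ : 1 ≤ Q.natDegree) :
    (Q.comp (X + 1) - Q).coeff (Q.natDegree - 1) = (Q.natDegree : ℂ) * Q.leadingCoeff := by
  set n := Q.natDegree with hn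
  rw [coeff_sub, coeff_comp_X_add_one]
  have hsplit : range (n + 1) = range (n - 1) ∪ {n - 1, n} := by
    ext x; simp only [Finset.mem_range, Finset.mem_union, Finset.mem_insert, Finset.mem_singleton]
    omega
  rw [hsplit, Finset.sum_union (by
    simp only [Finset.disjoint_left, Finset.mem_range, Finset.mem_insert, Finset.mem_singleton]
    omega)]
  have h1 : ∑ k ∈ range (n - 1), Q.coeff k * (k.choose (n-1) : ℂ) = 0 := by
    refine Finset.sum_eq_zero fun k hk => ?_
    rw [Nat.choose_eq_zero_of_lt (Finset.mem_range.mp hk)]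
    simp
  have hch : (n.choose (n-1)) = n := by
    have h := Nat.choose_symm (n := n) (k := n-1) (by omega)
    have h2 : n - (n-1) = 1 := by omega
    rw [h2, Nat.choose_one_right] at h
    omega
  have h2 : ({n - 1, n} : Finset ℕ).sum (fun k => Q.coeff k * (k.choose (n-1) : ℂ))
      = Q.coeff (n-1) + Q.coeff n * (n : ℂ) := by
    rw [Finset.sum_insert (by simp only [Finset.mem_singleton]; omega), Finset.sum_singleton,
      Nat.choose_self, hch]
    push_cast; ring
  rw [h1, h2, zero_add]
  have : Q.coeff n = Q.leadingCoeff := by rw [hn, coeff_natDegree]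
  rw [this]
  ring

lemma stepP_self_exact {Q : Polynomial ℂ} {mu : ℂ} (hmu : mu ≠ 0) (hQ : 1 ≤ Q.natDegree) :
    stepP mu mu Q ≠ 0 ∧ (stepP mu mu Q).natDegree = Q.natDegree - 1 := by
  have hQ0 : Q ≠ 0 := fun h => by simp [h] at hQ
  have hsm : stepP mu mu Q = mu • (Q.comp (X + 1) - Q) := by rw [stepP, smul_sub]
  have hco : (stepP mu mu Q).coeff (Q.natDegree - 1) ≠ 0 := by
    rw [hsm, coeff_smul, delta_coeff_pred hQ, smul_eq_mul]
    refine mul_ne_zero hmu (mul_ne_zero ?_ (leadingCoeff_ne_zero.mpr hQ0))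
    exact Nat.cast_ne_zero.mpr (by omega)
  constructor
  · intro h; rw [h, coeff_zero] at hco; exact hco rfl
  · have h1 := le_natDegree_of_ne_zero hco
    have h2 := stepP_self_natDegree_lt mu hQ
    omega

lemma stepP_iter_exact {Q : Polynomial ℂ} {mu : ℂ} (hmu : mu ≠ 0) (hQ0 : Q ≠ 0)
    {s : ℕ} (hs : s ≤ Q.natDegree) :
    (stepP mu mu)^[s] Q ≠ 0 ∧ ((stepP mu mu)^[s] Q).natDegree = Q.natDegree - s := by
  induction s generalizing Q with
  | zero => simpa using hQ0
  | succ s ih =>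
      have h1 : 1 ≤ Q.natDegree := by omega
      obtain ⟨hne, hdeg⟩ := stepP_self_exact hmu h1
      rw [Function.iterate_succ_apply]
      have := ih hne (by omega)
      refine ⟨this.1, ?_⟩
      rw [this.2, hdeg]; omega

/-- If the operator `c(S)` kills `P(n)a^n` then `(X - a)^{deg P + 1} ∣ c`. -/
lemma div_of_kills {c P : Polynomial ℂ} {a : ℂ} (ha : a ≠ 0) (hP : P ≠ 0)
    (h : (aeval shiftE c) (eseq P a) = 0) :
    (X - C a) ^ (P.natDegree + 1) ∣ c := by
  rcases eq_or_ne c 0 with rfl | hc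
  · exact dvd_zero _
  set s := rootMultiplicity a c with hs
  by_cases hsle : P.natDegree + 1 ≤ s
  · exact dvd_trans (pow_dvd_pow _ hsle) (Polynomial.pow_rootMultiplicity_dvd c a)
  exfalso
  have hsP : s ≤ P.natDegree := by omega
  set e := c /ₘ (X - C a) ^ s with he
  have hce : c = e * (X - C a) ^ s := by
    rw [he, hs, mul_comm]
    exact (Polynomial.pow_mul_divByMonic_rootMultiplicity_eq c a).symm
  have heval : e.eval a ≠ 0 := Polynomial.eval_divByMonic_pow_rootMultiplicity_ne_zero a hc
  obtain ⟨hPs0, hPsdeg⟩ := stepP_iter_exact ha hP hsP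
  set Ps := (stepP a a)^[s] P with hPs
  have h2 : (aeval shiftE c) (eseq P a) = (aeval shiftE e) (eseq Ps a) := by
    rw [hce, map_mul, Module.End.mul_apply, stepIter]
  rw [h2, aeval_eseq] at h
  have hcop := eseq_eq_zero ha h
  have := cop_coeff e Ps a
  rw [hcop, coeff_zero] at this
  exact (mul_ne_zero heval (leadingCoeff_ne_zero.mpr hPs0)) this.symm

lemma comp_coeff_top (Q : Polynomial ℂ) (r : ℂ) :
    (Q.comp (X + C r)).coeff Q.natDegree = Q.leadingCoeff := by
  have h1 : Q.comp (X + C r) = taylor r Q := (taylor_apply _ _).symm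
  have hnd : (Q.comp (X + C r)).natDegree = Q.natDegree := by rw [h1, natDegree_taylor]
  rw [← hnd, coeff_natDegree, leadingCoeff_comp (by rw [natDegree_X_add_C]; omega),
    (monic_X_add_C r).leadingCoeff, one_pow, mul_one]

lemma stepP_inj {mu a : ℂ} (hne : a ≠ mu) {Q : Polynomial ℂ} (h : stepP mu a Q = 0) :
    Q = 0 := by
  by_contra hQ
  have : (stepP mu a Q).coeff Q.natDegree = (a - mu) * Q.leadingCoeff := by
    rw [stepP, coeff_sub, coeff_smul, coeff_smul]
    have : (X + 1 : Polynomial ℂ) = X + C 1 := by rw [C_1]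
    rw [this, comp_coeff_top, coeff_natDegree]
    simp [smul_eq_mul]; ring
  rw [h, coeff_zero] at this
  exact mul_ne_zero (sub_ne_zero.mpr hne) (leadingCoeff_ne_zero.mpr hQ) this.symm

lemma stepP_iter_inj {mu a : ℂ} (hne : a ≠ mu) {Q : Polynomial ℂ} {s : ℕ}
    (h : (stepP mu a)^[s] Q = 0) : Q = 0 := by
  induction s generalizing Q with
  | zero => exact h
  | succ s ih => exact stepP_inj hne (ih (by rwa [← Function.iterate_succ_apply]))

lemma liseq : ∀ (m : ℕ) (lam : Fin m → ℂ), Function.Injective lam → (∀ j, lam j ≠ 0) →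
    ∀ (Q : Fin m → Polynomial ℂ),
    (∀ n : ℕ, ∑ j, (Q j).eval (n:ℂ) * lam j ^ n = 0) → ∀ j, Q j = 0 := by
  intro m
  induction m with
  | zero => exact fun lam _ _ Q _ j => absurd j.2 (by omega)
  | succ m ih =>
    intro lam hinj hne Q hsum
    set mu := lam (Fin.last m) with hmu
    set nu := (Q (Fin.last m)).natDegree + 1 with hnu
    have hseq : (∑ j : Fin (m+1), eseq (Q j) (lam j)) = 0 := by
      funext n
      rw [Finset.sum_apply]
      simpa [eseq] using hsum n
    have h0 : (∑ j : Fin (m+1), eseq ((stepP mu (lam j))^[nu] (Q j)) (lam j)) = 0 := by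
      have := map_sum (aeval shiftE ((X - C mu)^nu)) (fun j => eseq (Q j) (lam j)) univ
      rw [hseq, map_zero] at this
      calc (∑ j : Fin (m+1), eseq ((stepP mu (lam j))^[nu] (Q j)) (lam j))
          = ∑ j : Fin (m+1), (aeval shiftE ((X - C mu)^nu)) (eseq (Q j) (lam j)) :=
            Finset.sum_congr rfl fun j _ => (stepIter mu (lam j) (Q j) nu).symm
        _ = 0 := this.symm
    have hlastzero : (stepP mu mu)^[nu] (Q (Fin.last m)) = 0 :=
      stepP_iter_zero mu (by omega)
    have hcast : (∑ j : Fin m, eseq ((stepP mu (lam j.castSucc))^[nu] (Q j.castSucc))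
        (lam j.castSucc)) = 0 := by
      rw [Fin.sum_univ_castSucc] at h0
      rw [← hmu] at h0
      rw [hlastzero, eseq_zero_poly, add_zero] at h0
      exact h0
    have hQc : ∀ j : Fin m, Q j.castSucc = 0 := by
      have hinj' : Function.Injective (fun j : Fin m => lam j.castSucc) :=
        hinj.comp (Fin.castSucc_injective m)
      have hne' : ∀ j : Fin m, lam j.castSucc ≠ 0 := fun j => hne _
      have hlam_ne : ∀ j : Fin m, lam j.castSucc ≠ mu := fun j =>
        fun h => (Fin.castSucc_lt_last j).ne (hinj h)
      have hih := ih (fun j => lam j.castSucc) hinj' hne'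
        (fun j => (stepP mu (lam j.castSucc))^[nu] (Q j.castSucc))
        (fun n => by
          have := congrFun hcast n
          rw [Finset.sum_apply] at this
          simpa [eseq] using this)
      exact fun j => stepP_iter_inj (hlam_ne j) (hih j)
    have hlast : Q (Fin.last m) = 0 := by
      apply eseq_eq_zero (hne (Fin.last m))
      funext n
      have := congrFun hseq n
      rw [Finset.sum_apply, Fin.sum_univ_castSucc] at this
      have hz : ∀ j : Fin m, eseq (Q j.castSucc) (lam j.castSucc) n = 0 := fun j => by
        rw [hQc j, eseq_zero_poly]; rfl
      rw [Finset.sum_eq_zero (fun j _ => hz j), zero_add] at this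
      exact this
    intro j
    refine Fin.lastCases hlast hQc j

lemma ext_zero {Pc : Polynomial ℂ} (hm : Pc.Monic) {u : ℕ → ℂ}
    (hrec : (aeval shiftE Pc) u = 0) (hinit : ∀ n < Pc.natDegree, u n = 0) : u = 0 := by
  set d := Pc.natDegree with hd
  have key : ∀ n, u n = 0 := by
    intro n
    induction n using Nat.strong_induction_on with
    | _ n ih =>
      by_cases h : n < d
      · exact hinit n h
      · have hdn : d ≤ n := le_of_not_gt h
        set mm := n - d with hmm
        have hmn : mm + d = n := by omega
        have h0 := congrFun hrec mm
        rw [aeval_shift_apply (Nat.lt_succ_self _)] at h0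
        rw [Finset.sum_range_succ] at h0
        have hco : Pc.coeff d = 1 := hm.coeff_natDegree
        have hz : ∑ t ∈ range d, Pc.coeff t * u (mm + t) = 0 :=
          Finset.sum_eq_zero fun t ht => by
            rw [ih (mm + t) (by have := Finset.mem_range.mp ht; omega), mul_zero]
        rw [hz, hco, zero_add, one_mul, hmn] at h0
        exact h0
  funext n; exact key n

lemma finpts (m : ℕ) (lam : Fin m → ℂ) (hinj : Function.Injective lam)
    (hne : ∀ j, lam j ≠ 0) (Q : Fin m → Polynomial ℂ) (nu : Fin m → ℕ)
    (hdeg : ∀ j, (Q j).natDegree < nu j) (M : ℕ) (hM : ∑ j, nu j ≤ M)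
    (hv : ∀ n : ℕ, n < M → ∑ j, (Q j).eval (n:ℂ) * lam j ^ n = 0) : ∀ j, Q j = 0 := by
  set Pc := ∏ j, (X - C (lam j)) ^ (nu j) with hPc
  have hmon : Pc.Monic := monic_prod_of_monic _ _ fun j _ => (monic_X_sub_C _).pow _
  have hnd : Pc.natDegree = ∑ j, nu j := by
    rw [hPc, natDegree_prod_of_monic _ _ fun j _ => (monic_X_sub_C _).pow _]
    exact Finset.sum_congr rfl fun j _ => by rw [natDegree_pow, natDegree_X_sub_C, mul_one]
  set u : ℕ → ℂ := fun n => ∑ j, (Q j).eval (n:ℂ) * lam j ^ n with hu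
  have husum : u = ∑ j, eseq (Q j) (lam j) := by
    funext n; rw [Finset.sum_apply]; rfl
  have hrec : (aeval shiftE Pc) u = 0 := by
    rw [husum, map_sum]
    refine Finset.sum_eq_zero fun j _ => ?_
    exact annihilate_dvd (lam j) (Finset.dvd_prod_of_mem _ (Finset.mem_univ j)) (hdeg j)
  have hzero : u = 0 := ext_zero hmon hrec (fun n hn => hv n (by omega))
  exact liseq m lam hinj hne Q fun n => congrFun hzero n

/-! ### Triangular basis of descPochhammer polynomials -/

lemma dp_single_mem (nu k : ℕ) (hk : k < nu) (a : ℂ) :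
    a • descPochhammer ℂ k ∈
      Submodule.span ℂ (Set.range fun k : Fin nu => descPochhammer ℂ (k:ℕ)) :=
  Submodule.smul_mem _ a (Submodule.subset_span ⟨⟨k, hk⟩, rfl⟩)

lemma dp_mem_span (nu : ℕ) :
    ∀ (n : ℕ) (Q : Polynomial ℂ), Q.natDegree ≤ n → Q.natDegree < nu →
      Q ∈ Submodule.span ℂ (Set.range fun k : Fin nu => descPochhammer ℂ (k:ℕ)) := by
  intro n
  induction n with
  | zero =>
      intro Q h0 hnu
      have hq : Q = C (Q.coeff 0) := eq_C_of_natDegree_eq_zero (by omega)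
      have : Q = Q.coeff 0 • descPochhammer ℂ 0 := by
        rw [descPochhammer_zero]
        conv_lhs => rw [hq]
        rw [smul_eq_C_mul, mul_one]
      rw [this]
      exact dp_single_mem nu 0 (by omega) _
  | succ n ihn =>
      intro Q hle hnu
      by_cases hn : Q.natDegree ≤ n
      · exact ihn Q hn hnu
      · have hnd : Q.natDegree = n + 1 := by omega
        have hQ0 : Q ≠ 0 := fun h => by rw [h, natDegree_zero] at hnd; omega
        set D := Q.leadingCoeff • descPochhammer ℂ (n+1) with hD
        have hDC : D = C Q.leadingCoeff * descPochhammer ℂ (n+1) := by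
          rw [hD, C_mul']
        have hlne : Q.leadingCoeff ≠ 0 := leadingCoeff_ne_zero.mpr hQ0
        have hDnd : D.natDegree = n + 1 := by
          rw [hDC, natDegree_C_mul hlne, descPochhammer_natDegree]
        have hD0 : D ≠ 0 := fun h => by rw [h, natDegree_zero] at hDnd; omega
        have hDlead : D.leadingCoeff = Q.leadingCoeff := by
          rw [hDC, leadingCoeff_mul, leadingCoeff_C,
            (monic_descPochhammer ℂ (n+1)).leadingCoeff, mul_one]
        have hdeg : Q.degree = D.degree := by
          rw [degree_eq_natDegree hQ0, degree_eq_natDegree hD0, hnd, hDnd]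
        have hsub := degree_sub_lt hdeg hQ0 hDlead.symm
        have hmemD : D ∈ Submodule.span ℂ
            (Set.range fun k : Fin nu => descPochhammer ℂ (k:ℕ)) :=
          dp_single_mem nu (n+1) (by omega) _
        rcases eq_or_ne (Q - D) 0 with hQD | hQD
        · have : Q = D := by
            have := sub_eq_zero.mp hQD
            exact this
          rw [this]; exact hmemD
        · have h1 : (Q - D).natDegree < Q.natDegree :=
            natDegree_lt_natDegree hQD hsub
          have hmem := ihn (Q - D) (by omega) (by omega)
          have : Q = (Q - D) + D := by ring
          rw [this]
          exact Submodule.add_mem _ hmem hmemD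

lemma dp_indep : ∀ (nu : ℕ) (c : Fin nu → ℂ),
    (∑ k : Fin nu, c k • descPochhammer ℂ (k:ℕ)) = 0 → ∀ k, c k = 0 := by
  intro nu
  induction nu with
  | zero => exact fun c _ k => absurd k.2 (by omega)
  | succ n ih =>
      intro c hc
      have hlast : c (Fin.last n) = 0 := by
        have h0 := congrArg (fun Q => Polynomial.coeff Q n) hc
        simp only [finset_sum_coeff, coeff_zero] at h0
        rw [Fin.sum_univ_castSucc] at h0
        have hz : ∀ k : Fin n, (c k.castSucc • descPochhammer ℂ ((k.castSucc:ℕ))).coeff n = 0 := by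
          intro k
          rw [coeff_smul, coeff_eq_zero_of_natDegree_lt, smul_zero]
          rw [descPochhammer_natDegree]
          exact k.2
        rw [Finset.sum_eq_zero (fun k _ => hz k), zero_add, coeff_smul] at h0
        simp only [Fin.val_last] at h0
        have h1 : (descPochhammer ℂ n).coeff n = 1 := by
          have := (monic_descPochhammer ℂ n).coeff_natDegree
          rwa [descPochhammer_natDegree] at this
        rw [h1, smul_eq_mul, mul_one] at h0
        exact h0
      have hrest : ∀ k : Fin n, c k.castSucc = 0 := by
        apply ih
        rw [Fin.sum_univ_castSucc, hlast, zero_smul, add_zero] at hc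
        exact hc
      exact fun k => Fin.lastCases hlast hrest k

/-! ### The vectors `pvec` and the bridge to `ellVec` -/

/-- The linear map `Q ↦ (Q(i) a^i)_{i < L}`. -/
noncomputable def pvecL (L : ℕ) (a : ℂ) : Polynomial ℂ →ₗ[ℂ] (Fin L → ℂ) where
  toFun Q := fun i => Q.eval ((i:ℕ):ℂ) * a ^ (i:ℕ)
  map_add' Q R := by funext i; simp [eval_add, add_mul]
  map_smul' c Q := by funext i; simp [eval_smul, smul_eq_mul]; ring

lemma pvecL_apply (L : ℕ) (a : ℂ) (Q : Polynomial ℂ) (i : Fin L) :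
    pvecL L a Q i = Q.eval ((i:ℕ):ℂ) * a ^ (i:ℕ) := rfl

lemma ellVec_eq_pvec (L k : ℕ) {a : ℂ} (ha : a ≠ 0) :
    ellVec L k a = (a⁻¹)^k • pvecL L a (descPochhammer ℂ k) := by
  funext i
  rw [ellVec]
  rw [Polynomial.iterate_derivative_X_pow_eq_smul]
  rw [eval_smul, eval_pow, eval_X, smul_eq_mul]
  show ((i:ℕ).descFactorial k : ℂ) * a ^ ((i:ℕ) - k)
      = (a⁻¹)^k • (pvecL L a (descPochhammer ℂ k) i)
  rw [smul_eq_mul, pvecL_apply, descPochhammer_eval_eq_descFactorial]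
  by_cases hik : k ≤ (i:ℕ)
  · have hpow : a ^ (i:ℕ) = a ^ ((i:ℕ) - k) * a ^ k := by
      rw [← pow_add]; congr 1; omega
    rw [hpow]
    have hinv : (a⁻¹)^k * a^k = 1 := by rw [← mul_pow, inv_mul_cancel₀ ha, one_pow]
    calc ((i:ℕ).descFactorial k : ℂ) * a ^ ((i:ℕ) - k)
        = (((i:ℕ).descFactorial k : ℂ) * a ^ ((i:ℕ) - k)) * ((a⁻¹)^k * a^k) := by
          rw [hinv, mul_one]
      _ = (a⁻¹)^k * (((i:ℕ).descFactorial k : ℂ) * (a ^ ((i:ℕ) - k) * a ^ k)) := by ring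
  · have hdf : (i:ℕ).descFactorial k = 0 := Nat.descFactorial_eq_zero_iff_lt.mpr (by omega)
    rw [hdf]
    push_cast
    ring

lemma pvec_dp_eq_ellVec (L k : ℕ) {a : ℂ} (ha : a ≠ 0) :
    pvecL L a (descPochhammer ℂ k) = a^k • ellVec L k a := by
  rw [ellVec_eq_pvec L k ha, smul_smul, ← mul_pow, mul_inv_cancel₀ ha, one_pow, one_smul]


/-! ### Main helpers -/

lemma main_li (m : ℕ) (lam : Fin m → ℂ) (P : Fin m → Polynomial ℂ)
    (hinj : Function.Injective lam) (hne : ∀ k, lam k ≠ 0)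
    (L : ℕ) (hdL : ∑ k, ((P k).natDegree + 1) ≤ L) :
    LinearIndependent ℂ
      (fun p : (Σ j : Fin m, Fin ((P j).natDegree + 1)) => ellVec L (p.2 : ℕ) (lam p.1)) := by
  rw [Fintype.linearIndependent_iff]
  intro g hg
  set Qp : Fin m → Polynomial ℂ := fun j =>
    ∑ k : Fin ((P j).natDegree + 1), (g ⟨j,k⟩ * ((lam j)⁻¹)^(k:ℕ)) • descPochhammer ℂ (k:ℕ)
    with hQp
  have hdeg : ∀ j, (Qp j).natDegree < (P j).natDegree + 1 := by
    refine fun j => Nat.lt_succ_iff.mpr ?_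
    exact natDegree_sum_le_of_forall_le (n := (P j).natDegree) univ
      (fun k : Fin ((P j).natDegree + 1) =>
        (g ⟨j,k⟩ * ((lam j)⁻¹)^(k:ℕ)) • descPochhammer ℂ (k:ℕ))
      (fun k _ => le_trans (natDegree_smul_le _ _)
        (by rw [descPochhammer_natDegree]; exact Nat.lt_succ_iff.mp k.2))
  have hval : ∀ n : ℕ, n < L → ∑ j, (Qp j).eval (n:ℂ) * lam j ^ n = 0 := by
    intro n hn
    have h := congrFun hg ⟨n, hn⟩
    rw [Finset.sum_apply] at h
    simp only [Pi.zero_apply] at h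
    have h2 : ∑ j : Fin m, ∑ k : Fin ((P j).natDegree+1),
        g ⟨j,k⟩ • ellVec L (k:ℕ) (lam j) ⟨n,hn⟩ = 0 := by
      rw [Finset.sum_sigma' univ (fun _ => univ)
        (fun j k => g ⟨j,k⟩ • ellVec L (k:ℕ) (lam j) ⟨n,hn⟩)]
      rw [Finset.univ_sigma_univ]
      exact h
    calc ∑ j, (Qp j).eval (n:ℂ) * lam j ^ n
        = ∑ j : Fin m, ∑ k : Fin ((P j).natDegree+1),
            g ⟨j,k⟩ • ellVec L (k:ℕ) (lam j) ⟨n,hn⟩ := by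
          refine Finset.sum_congr rfl fun j _ => ?_
          rw [hQp]
          simp only [eval_finset_sum, eval_smul, smul_eq_mul]
          rw [Finset.sum_mul]
          refine Finset.sum_congr rfl fun k _ => ?_
          rw [ellVec_eq_pvec _ _ (hne j)]
          simp only [Pi.smul_apply, pvecL_apply, smul_eq_mul]
          show g ⟨j,k⟩ * (lam j)⁻¹^(k:ℕ) * (descPochhammer ℂ (k:ℕ)).eval
            (((⟨n,hn⟩ : Fin L) : ℕ):ℂ) * lam j ^ ((⟨n,hn⟩ : Fin L) : ℕ) = _
          ring
      _ = 0 := h2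
  have hQ0 := finpts m lam hinj hne Qp (fun j => (P j).natDegree + 1) hdeg L hdL hval
  rintro ⟨j, k⟩
  have hcoef := dp_indep ((P j).natDegree + 1)
    (fun k => g ⟨j,k⟩ * ((lam j)⁻¹)^(k:ℕ)) (hQ0 j) k
  rcases mul_eq_zero.mp hcoef with h | h
  · exact h
  · exact absurd h (pow_ne_zero _ (inv_ne_zero (hne j)))


lemma pvec_mem_espan (m : ℕ) (lam : Fin m → ℂ) (P : Fin m → Polynomial ℂ)
    (hne : ∀ k, lam k ≠ 0) (L : ℕ) (j : Fin m) (Q : Polynomial ℂ)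
    (hQ : Q.natDegree < (P j).natDegree + 1) :
    pvecL L (lam j) Q ∈ Submodule.span ℂ
      (Set.range (fun p : (Σ j : Fin m, Fin ((P j).natDegree + 1)) =>
        ellVec L (p.2 : ℕ) (lam p.1))) := by
  have hQspan := dp_mem_span ((P j).natDegree + 1) Q.natDegree Q le_rfl hQ
  have hmap := Submodule.mem_map_of_mem (f := pvecL L (lam j)) hQspan
  rw [Submodule.map_span] at hmap
  refine Submodule.span_le.mpr ?_ hmap
  rintro _ ⟨_, ⟨k, rfl⟩, rfl⟩
  rw [pvec_dp_eq_ellVec L (k:ℕ) (hne j)]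
  exact Submodule.smul_mem _ _ (Submodule.subset_span ⟨⟨j, k⟩, rfl⟩)

lemma traj_le_espan (f : ℕ → ℂ) (m : ℕ) (lam : Fin m → ℂ) (P : Fin m → Polynomial ℂ)
    (hne : ∀ k, lam k ≠ 0)
    (hf : ∀ n : ℕ, f n = ∑ k, (P k).eval (n : ℂ) * lam k ^ n) (N L : ℕ) :
    trajSpace f N L ≤ Submodule.span ℂ
      (Set.range (fun p : (Σ j : Fin m, Fin ((P j).natDegree + 1)) =>
        ellVec L (p.2 : ℕ) (lam p.1))) := by
  rw [trajSpace]
  refine Submodule.span_le.mpr ?_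
  rintro v ⟨i, hiN, rfl⟩
  have hv : (fun j : Fin L => f (i + (j:ℕ)))
      = ∑ k : Fin m, pvecL L (lam k) ((lam k)^i • ((P k).comp (X + C (i:ℂ)))) := by
    funext j'
    rw [Finset.sum_apply, hf (i + j')]
    refine Finset.sum_congr rfl fun k _ => ?_
    rw [pvecL_apply, eval_smul, smul_eq_mul]
    rw [show (P k).comp (X + C (i:ℂ)) = taylor (i:ℂ) (P k) from (taylor_apply _ _).symm,
      taylor_eval, pow_add]
    push_cast
    ring
  rw [hv]
  refine Submodule.sum_mem _ fun k _ => ?_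
  refine pvec_mem_espan m lam P hne L k _ (Nat.lt_succ_iff.mpr ?_)
  refine le_trans (natDegree_smul_le _ _) ?_
  rw [show (P k).comp (X + C (i:ℂ)) = taylor (i:ℂ) (P k) from (taylor_apply _ _).symm,
    natDegree_taylor]

lemma lagged_li (f : ℕ → ℂ) (m : ℕ) (lam : Fin m → ℂ) (P : Fin m → Polynomial ℂ)
    (hinj : Function.Injective lam) (hne : ∀ k, lam k ≠ 0) (hP : ∀ k, P k ≠ 0)
    (hf : ∀ n : ℕ, f n = ∑ k, (P k).eval (n : ℂ) * lam k ^ n)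
    (d : ℕ) (hd : d = ∑ k, ((P k).natDegree + 1))
    (L : ℕ) (hdL : d < L) (c : Fin d → ℂ)
    (hc : (∑ i, c i • (fun j : Fin L => f ((i:ℕ) + (j:ℕ)))) = 0) : ∀ i, c i = 0 := by
  intro i₀
  have hd1 : 1 ≤ d := by have := i₀.2; omega
  set cpoly : Polynomial ℂ := ∑ t : Fin d, C (c t) * X^(t:ℕ) with hcpoly
  have hcnd : cpoly.natDegree < d := by
    refine Nat.lt_of_le_of_lt (natDegree_sum_le_of_forall_le (n := d-1) univ _
      (fun t _ => le_trans (natDegree_C_mul_X_pow_le _ _) (by have := t.2; omega))) (by omega)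
  have hccoeff : ∀ (t : ℕ) (ht : t < d), cpoly.coeff t = c ⟨t, ht⟩ := by
    intro t ht
    rw [hcpoly, finset_sum_coeff]
    rw [Finset.sum_eq_single (⟨t, ht⟩ : Fin d) ?_ ?_]
    · rw [coeff_C_mul, coeff_X_pow, if_pos rfl, mul_one]
    · intro b _ hb
      rw [coeff_C_mul, coeff_X_pow, if_neg, mul_zero]
      intro hh
      exact hb (Fin.ext hh.symm)
    · intro h; exact absurd (Finset.mem_univ _) h
  set g := (aeval shiftE cpoly) f with hg
  have hgval : ∀ n, g n = ∑ t : Fin d, c t * f (n + (t:ℕ)) := by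
    intro n
    rw [hg, aeval_shift_apply (M := d) hcnd]
    rw [← Fin.sum_univ_eq_sum_range (fun t => cpoly.coeff t * f (n + t)) d]
    exact Finset.sum_congr rfl fun t _ => by rw [hccoeff (t:ℕ) t.2]
  have hginit : ∀ n, n < L → g n = 0 := by
    intro n hn
    have h := congrFun hc ⟨n, hn⟩
    rw [Finset.sum_apply] at h
    simp only [Pi.smul_apply, smul_eq_mul, Pi.zero_apply] at h
    rw [hgval]
    calc ∑ t : Fin d, c t * f (n + (t:ℕ))
        = ∑ t : Fin d, c t * f ((t:ℕ) + n) := by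
          refine Finset.sum_congr rfl fun t _ => by rw [add_comm n]
      _ = 0 := h
  set Pc := ∏ j : Fin m, (X - C (lam j)) ^ ((P j).natDegree + 1) with hPcdef
  have hmon : Pc.Monic := monic_prod_of_monic _ _ fun j _ => (monic_X_sub_C _).pow _
  have hndPc : Pc.natDegree = d := by
    rw [hPcdef, natDegree_prod_of_monic _ _ fun j _ => (monic_X_sub_C _).pow _, hd]
    exact Finset.sum_congr rfl fun j _ => by rw [natDegree_pow, natDegree_X_sub_C, mul_one]
  have hfeq : f = ∑ j, eseq (P j) (lam j) := funext fun n => by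
    rw [Finset.sum_apply]; exact hf n
  have hPf : (aeval shiftE Pc) f = 0 := by
    rw [hfeq, map_sum]
    exact Finset.sum_eq_zero fun j _ =>
      annihilate_dvd (lam j) (Finset.dvd_prod_of_mem _ (Finset.mem_univ j)) (Nat.lt_succ_self _)
  have hgrec : (aeval shiftE Pc) g = 0 := by
    rw [hg, ← Module.End.mul_apply, ← map_mul, mul_comm, map_mul, Module.End.mul_apply, hPf,
      map_zero]
  have hgzero : g = 0 := ext_zero hmon hgrec (fun n hn => hginit n (by omega))
  set R : Fin m → Polynomial ℂ := fun j =>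
    ∑ t ∈ range (cpoly.natDegree + 1), (cpoly.coeff t * (lam j)^t) • (P j).comp (X + C (t:ℂ))
    with hR
  have h1 : ∑ j, eseq (R j) (lam j) = 0 := by
    calc ∑ j, eseq (R j) (lam j)
        = ∑ j, (aeval shiftE cpoly) (eseq (P j) (lam j)) :=
          Finset.sum_congr rfl fun j _ => (aeval_eseq cpoly (P j) (lam j)).symm
      _ = (aeval shiftE cpoly) (∑ j, eseq (P j) (lam j)) :=
          (map_sum (aeval shiftE cpoly) _ univ).symm
      _ = (aeval shiftE cpoly) f := by rw [← hfeq]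
      _ = 0 := hgzero
  have hR0 : ∀ j, R j = 0 := liseq m lam hinj hne R (fun n => by
    have := congrFun h1 n
    rw [Finset.sum_apply] at this
    simpa [eseq] using this)
  have hsplit : ∀ j, (aeval shiftE cpoly) (eseq (P j) (lam j)) = 0 := by
    intro j
    rw [aeval_eseq]
    have : (∑ t ∈ range (cpoly.natDegree + 1),
        (cpoly.coeff t * (lam j)^t) • (P j).comp (X + C (t:ℂ))) = 0 := hR0 j
    rw [this, eseq_zero_poly]
  have hdvd : ∀ j, (X - C (lam j)) ^ ((P j).natDegree + 1) ∣ cpoly := fun j =>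
    div_of_kills (hne j) (hP j) (hsplit j)
  have hPcdvd : Pc ∣ cpoly := by
    rw [hPcdef]
    refine Finset.prod_dvd_of_coprime ?_ (fun j _ => hdvd j)
    exact (Pairwise.set_pairwise
      (fun a b hab => IsCoprime.pow (pairwise_coprime_X_sub_C hinj hab)) _)
  have hc0 : cpoly = 0 := eq_zero_of_dvd_of_natDegree_lt hPcdvd (by rw [hndPc]; exact hcnd)
  have h := hccoeff (i₀:ℕ) i₀.2
  rw [hc0, coeff_zero] at h
  exact h.symm

/-- For a series of difference dimension `d` with signal roots `λ_j` of
multiplicities `ν_j = deg P_j + 1`, and `d < L ≤ N - d + 1`, the `d` vectors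
`ℓ^k_L(λ_j)`, `0 ≤ k < ν_j`, form a basis of the trajectory space. -/
theorem ell_vectors_basis_of_trajectory_space
    (f : ℕ → ℂ) (m : ℕ) (lam : Fin m → ℂ) (P : Fin m → Polynomial ℂ)
    (hinj : Function.Injective lam) (hne : ∀ k, lam k ≠ 0) (hP : ∀ k, P k ≠ 0)
    (hf : ∀ n : ℕ, f n = ∑ k, (P k).eval (n : ℂ) * lam k ^ n)
    (d : ℕ) (hd : d = ∑ k, ((P k).natDegree + 1))
    (N L : ℕ) (hdN : 2 * d ≤ N) (hdL : d < L) (hLN : L + d ≤ N + 1) :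
    LinearIndependent ℂ
      (fun p : (Σ j : Fin m, Fin ((P j).natDegree + 1)) => ellVec L (p.2 : ℕ) (lam p.1)) ∧
    Submodule.span ℂ
      (Set.range (fun p : (Σ j : Fin m, Fin ((P j).natDegree + 1)) =>
        ellVec L (p.2 : ℕ) (lam p.1))) = trajSpace f N L := by
  have hLI := main_li m lam P hinj hne L (by rw [← hd]; omega)
  refine ⟨hLI, ?_⟩
  have hTE := traj_le_espan f m lam P hne hf N L
  have hE : Module.finrank ℂ (Submodule.span ℂ
      (Set.range (fun p : (Σ j : Fin m, Fin ((P j).natDegree + 1)) =>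
        ellVec L (p.2 : ℕ) (lam p.1)))) = d := by
    rw [finrank_span_eq_card hLI, Fintype.card_sigma]
    rw [hd]
    exact Finset.sum_congr rfl fun j _ => by rw [Fintype.card_fin]
  set w : Fin d → (Fin L → ℂ) := fun i => (fun j : Fin L => f ((i:ℕ) + (j:ℕ))) with hw
  have hwmem : ∀ i : Fin d, w i ∈ trajSpace f N L := fun i =>
    Submodule.subset_span ⟨(i:ℕ), by have := i.2; omega, rfl⟩
  have hwLI : LinearIndependent ℂ w :=
    Fintype.linearIndependent_iff.mpr fun c hc =>
      lagged_li f m lam P hinj hne hP hf d hd L hdL c hc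
  have hspanw : Submodule.span ℂ (Set.range w) ≤ trajSpace f N L :=
    Submodule.span_le.mpr (by rintro _ ⟨i, rfl⟩; exact hwmem i)
  have hfT : d ≤ Module.finrank ℂ (trajSpace f N L) := by
    have h1 : Module.finrank ℂ (Submodule.span ℂ (Set.range w)) = d := by
      rw [finrank_span_eq_card hwLI, Fintype.card_fin]
    rw [← h1]
    exact Submodule.finrank_mono hspanw
  refine (Submodule.eq_of_le_of_finrank_le hTE ?_).symm
  rw [hE]
  exact hfT
end

section
/- If a finite time series F_N satisfies an LRF of order d_0 ≤ min(L−1, N−L+1) (i.e., f_{n+d_0} = Σ_{k=0}^{d_0−1} a_k f_{n+k} for 0 ≤ n ≤ N−d_0−1), then F_N is L-continuable: there exists unique α ∈ ℂ with 𝔏^{(L)}(f_0,…,f_{N-1}) = 𝔏^{(L)}(f_0,…,f_{N-1},α), and the continuation is achieved by the same LRF. -/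
open Finset

noncomputable def phiMap (L d₀ : ℕ) (a : ℕ → ℂ) (hL : 0 < L) : (Fin L → ℂ) →ₗ[ℂ] ℂ :=
  LinearMap.proj ⟨L - 1, by omega⟩ -
    ∑ k ∈ Finset.range d₀, a k • LinearMap.proj ⟨min (L - 1 - d₀ + k) (L - 1), by omega⟩

lemma phiMap_apply (L d₀ : ℕ) (a : ℕ → ℂ) (hL : 0 < L) (v : Fin L → ℂ) :
    phiMap L d₀ a hL v =
      v ⟨L - 1, by omega⟩ -
        ∑ k ∈ Finset.range d₀, a k * v ⟨min (L - 1 - d₀ + k) (L - 1), by omega⟩ := by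
  simp [phiMap]

lemma phi_vanish (f : ℕ → ℂ) (N L d₀ : ℕ) (hL : 0 < L) (hd₀L : d₀ < L)
    (a : ℕ → ℂ)
    (hlrf : ∀ n : ℕ, n + d₀ < N → f (n + d₀) = ∑ k ∈ Finset.range d₀, a k * f (n + k))
    (v : Fin L → ℂ) (hv : v ∈ trajSpace f N L) : phiMap L d₀ a hL v = 0 := by
  have hle : trajSpace f N L ≤ LinearMap.ker (phiMap L d₀ a hL) := by
    rw [trajSpace, Submodule.span_le]
    rintro v ⟨i, hi, rfl⟩
    simp only [SetLike.mem_coe, LinearMap.mem_ker, phiMap_apply, Fin.val_mk]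
    rw [sub_eq_zero, show i + (L - 1) = (i + (L - 1 - d₀)) + d₀ by omega,
      hlrf _ (by omega)]
    apply Finset.sum_congr rfl
    intro k hk
    simp only [Finset.mem_range] at hk
    have : i + (L - 1 - d₀) + k = i + min (L - 1 - d₀ + k) (L - 1) := by omega
    rw [this]
  exact hle hv

/-- If a finite series of length `N` satisfies an LRF of order
`d₀ ≤ min (L-1) (N-L+1)`, then it is (forward) `L`-continuable, and the
continuation is achieved by the same LRF. -/
theorem lrf_implies_L_continuable
    (f : ℕ → ℂ) (N L d₀ : ℕ) (hL : 1 < L) (hLN : L < N)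
    (hd₀L : d₀ < L) (hd₀K : d₀ + L ≤ N + 1)
    (a : ℕ → ℂ)
    (hlrf : ∀ n : ℕ, n + d₀ < N → f (n + d₀) = ∑ k ∈ Finset.range d₀, a k * f (n + k)) :
    (∃! α : ℂ, trajSpace (Function.update f N α) (N + 1) L = trajSpace f N L) ∧
    trajSpace
      (Function.update f N (∑ k ∈ Finset.range d₀, a k * f (N - d₀ + k))) (N + 1) L =
      trajSpace f N L := by
  have hL0 : 0 < L := by omega
  set α₀ : ℂ := ∑ k ∈ Finset.range d₀, a k * f (N - d₀ + k) with hα₀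
  have key : trajSpace (Function.update f N α₀) (N + 1) L = trajSpace f N L := by
    apply le_antisymm
    · rw [trajSpace, Submodule.span_le]
      rintro v ⟨i, hi, rfl⟩
      by_cases hcase : i + L ≤ N
      · exact Submodule.subset_span ⟨i, hcase, funext fun j =>
          Function.update_of_ne (by have := j.isLt; omega) _ _⟩
      · have hi' : i = N + 1 - L := by omega
        subst hi'
        have hrep : (fun j : Fin L => Function.update f N α₀ (N + 1 - L + (j : ℕ)))
            = ∑ k ∈ Finset.range d₀,
                a k • (fun j : Fin L => f (N + 1 - L - d₀ + k + (j : ℕ))) := by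
          funext j
          rw [Finset.sum_apply]
          simp only [Pi.smul_apply, smul_eq_mul]
          rcases Nat.lt_or_ge (j : ℕ) (L - 1) with hj | hj
          · rw [Function.update_of_ne (by omega),
              show N + 1 - L + (j : ℕ) = (N + 1 - L - d₀ + (j : ℕ)) + d₀ by omega,
              hlrf _ (by omega)]
            apply Finset.sum_congr rfl
            intro k hk
            simp only [Finset.mem_range] at hk
            have : N + 1 - L - d₀ + (j : ℕ) + k = N + 1 - L - d₀ + k + (j : ℕ) := by omega
            rw [this]
          · have hj' : (j : ℕ) = L - 1 := by have := j.isLt; omega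
            rw [show N + 1 - L + (j : ℕ) = N by omega, Function.update_self, hα₀]
            apply Finset.sum_congr rfl
            intro k hk
            simp only [Finset.mem_range] at hk
            have : N - d₀ + k = N + 1 - L - d₀ + k + (j : ℕ) := by omega
            rw [this]
        rw [hrep]
        apply Submodule.sum_mem
        intro k hk
        simp only [Finset.mem_range] at hk
        exact Submodule.smul_mem _ _
          (Submodule.subset_span ⟨N + 1 - L - d₀ + k, by omega, rfl⟩)
    · apply Submodule.span_mono
      rintro v ⟨i, hi, rfl⟩
      exact ⟨i, by omega, funext fun j =>
        (Function.update_of_ne (by have := j.isLt; omega) _ _).symm⟩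
  refine ⟨⟨α₀, key, ?_⟩, key⟩
  intro α hα
  have hw : (fun j : Fin L => Function.update f N α (N + 1 - L + (j : ℕ))) ∈
      trajSpace f N L := by
    rw [← hα]
    exact Submodule.subset_span ⟨N + 1 - L, by omega, rfl⟩
  have h0 := phi_vanish f N L d₀ hL0 hd₀L a hlrf _ hw
  rw [phiMap_apply] at h0
  have eA : Function.update f N α
      (N + 1 - L + ((⟨L - 1, by omega⟩ : Fin L) : ℕ)) = α := by
    simp only [Fin.val_mk]
    rw [show N + 1 - L + (L - 1) = N by omega, Function.update_self]
  have eB : ∀ k ∈ Finset.range d₀,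
      a k * Function.update f N α
        (N + 1 - L + ((⟨min (L - 1 - d₀ + k) (L - 1), by omega⟩ : Fin L) : ℕ)) =
      a k * f (N - d₀ + k) := by
    intro k hk
    simp only [Finset.mem_range] at hk
    simp only [Fin.val_mk]
    rw [show N + 1 - L + min (L - 1 - d₀ + k) (L - 1) = N - d₀ + k by omega,
      Function.update_of_ne (by omega)]
  rw [eA, Finset.sum_congr rfl eB] at h0
  have := sub_eq_zero.mp h0
  rw [hα₀]
  exact this
end

section
/- Let F_N^{(1)} be a nonzero time series and F_N^{(2)} a time series of difference dimension d with characteristic polynomial P^{(2)}(z), and let d < L ≤ N−d+1. Let {U_1,…,U_r} be a basis of 𝔏^{(L)}(F_N^{(1)}). Then F_N^{(1)} and F_N^{(2)} are weakly left-separable (their L-trajectory spaces are orthogonal) if and only if P^{(2)}(z) divides the conjugate generating polynomial \overline{U_i}(z) for every i = 1,…,r. -/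
open Polynomial Finset

noncomputable def Esh : Module.End ℂ (ℕ → ℂ) where
  toFun f := fun n => f (n + 1)
  map_add' := by intros; rfl
  map_smul' := by intros; rfl

lemma Esh_apply (f : ℕ → ℂ) (n : ℕ) : Esh f n = f (n + 1) := rfl

lemma Esh_pow_apply (b : ℕ) (f : ℕ → ℂ) (n : ℕ) : (Esh ^ b) f n = f (n + b) := by
  induction b generalizing f n with
  | zero => rfl
  | succ b ih =>
    rw [pow_succ, Module.End.mul_apply, ih, Esh_apply]
    ring_nf

lemma aeval_Esh_apply (R : ℂ[X]) (f : ℕ → ℂ) (n : ℕ) :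
    (aeval Esh R) f n = ∑ b ∈ Finset.range (R.natDegree + 1), R.coeff b * f (n + b) := by
  rw [aeval_eq_sum_range, LinearMap.coe_sum, Finset.sum_apply, Finset.sum_apply]
  refine Finset.sum_congr rfl fun b _ => ?_
  rw [LinearMap.smul_apply, Pi.smul_apply, smul_eq_mul, Esh_pow_apply]

noncomputable def expp (l : ℂ) (P : ℂ[X]) : ℕ → ℂ := fun n => P.eval (n : ℂ) * l ^ n

lemma aeval_sub_expp (l mu : ℂ) (P : ℂ[X]) :
    (aeval Esh (X - C mu)) (expp l P) = expp l (l • P.comp (X + C 1) - mu • P) := by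
  funext n
  simp only [map_sub, aeval_X, aeval_C, LinearMap.sub_apply, Pi.sub_apply,
    Module.algebraMap_end_apply, Pi.smul_apply, smul_eq_mul, expp, Esh_apply]
  simp only [eval_sub, eval_smul, eval_comp, eval_add, eval_X, eval_C, smul_eq_mul]
  push_cast
  ring

lemma coeff_comp_X_add_one_s10 (P : ℂ[X]) (s : ℕ) :
    (P.comp (X + C 1)).coeff s = ∑ i ∈ Finset.range (P.natDegree + 1), P.coeff i * (i.choose s) := by
  conv_lhs => rw [P.as_sum_range' (P.natDegree + 1) (lt_add_one _)]
  rw [Polynomial.sum_comp, finset_sum_coeff]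
  refine Finset.sum_congr rfl fun i _ => ?_
  rw [monomial_comp, C_1, coeff_C_mul, Polynomial.coeff_X_add_one_pow]

lemma coeff_comp_X_add_one_of_ge (P : ℂ[X]) (s : ℕ) (hs : P.natDegree ≤ s) :
    (P.comp (X + C 1)).coeff s = P.coeff s := by
  rw [coeff_comp_X_add_one_s10]
  rcases lt_or_ge s (P.natDegree + 1) with h | h
  · have hsd : s = P.natDegree := le_antisymm (Nat.lt_succ_iff.mp h) hs
    subst hsd
    rw [Finset.sum_range_succ, Nat.choose_self, Nat.cast_one, mul_one,
      Finset.sum_eq_zero, zero_add]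
    intro i hi
    rw [Nat.choose_eq_zero_of_lt (Finset.mem_range.mp hi), Nat.cast_zero, mul_zero]
  · rw [Finset.sum_eq_zero, P.coeff_eq_zero_of_natDegree_lt (by omega)]
    intro i hi
    rw [Nat.choose_eq_zero_of_lt (by simp at hi; omega), Nat.cast_zero, mul_zero]

/-- The "difference" polynomial operation appearing when applying `E - l` to `expp l P`. -/
noncomputable def Dl (l : ℂ) (P : ℂ[X]) : ℂ[X] := l • P.comp (X + C 1) - l • P

lemma Dl_natDegree_le (l : ℂ) (P : ℂ[X]) (s : ℕ) (hP : P.natDegree ≤ s + 1) :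
    (Dl l P).natDegree ≤ s := by
  rw [Polynomial.natDegree_le_iff_coeff_eq_zero]
  intro j hj
  have hj' : P.natDegree ≤ j := by omega
  rw [Dl, Polynomial.coeff_sub, Polynomial.coeff_smul, Polynomial.coeff_smul,
    coeff_comp_X_add_one_of_ge P j hj', sub_self]

lemma Dl_coeff (l : ℂ) (P : ℂ[X]) (s : ℕ) (hP : P.natDegree = s + 1) :
    (Dl l P).coeff s = l * (s + 1) * P.coeff (s + 1) := by
  rw [Dl, Polynomial.coeff_sub, Polynomial.coeff_smul, Polynomial.coeff_smul,
    coeff_comp_X_add_one_s10, hP]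
  rw [Finset.sum_range_succ, Finset.sum_range_succ, Finset.sum_eq_zero, zero_add]
  · simp only [Nat.choose_self, Nat.cast_one, mul_one, Nat.choose_succ_self_right,
      smul_eq_mul]
    push_cast
    ring
  · intro i hi
    rw [Nat.choose_eq_zero_of_lt (Finset.mem_range.mp hi), Nat.cast_zero, mul_zero]

lemma Dl_exact (l : ℂ) (hl : l ≠ 0) (P : ℂ[X]) (s : ℕ) (hP : P.natDegree = s + 1) :
    (Dl l P).natDegree = s ∧ Dl l P ≠ 0 := by
  have hPne : P ≠ 0 := fun h => by simp [h] at hP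
  have hc : (Dl l P).coeff s ≠ 0 := by
    rw [Dl_coeff l P s hP]
    have h1 : P.coeff (s + 1) ≠ 0 := by
      rw [← hP]; exact Polynomial.leadingCoeff_ne_zero.mpr hPne
    have h2 : (s : ℂ) + 1 ≠ 0 := by
      have : ((s + 1 : ℕ) : ℂ) ≠ 0 := Nat.cast_ne_zero.mpr (Nat.succ_ne_zero s)
      push_cast at this; exact this
    exact mul_ne_zero (mul_ne_zero hl h2) h1
  have hne : Dl l P ≠ 0 := fun h => hc (by rw [h, Polynomial.coeff_zero])
  refine ⟨le_antisymm (Dl_natDegree_le l P s (le_of_eq hP)) ?_, hne⟩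
  exact Polynomial.le_natDegree_of_ne_zero hc

lemma aeval_sub_expp' (l mu : ℂ) (P : ℂ[X]) :
    (aeval Esh (X - C mu)) (expp l P) = expp l (l • P.comp (X + C 1) - mu • P) :=
  aeval_sub_expp l mu P

lemma aeval_sub_expp_self (l : ℂ) (P : ℂ[X]) :
    (aeval Esh (X - C l)) (expp l P) = expp l (Dl l P) := aeval_sub_expp l l P

lemma expp_zero (l : ℂ) : expp l 0 = 0 := by
  funext n; simp [expp]

/-- Applying `(E - l)^(natDegree P)` to `expp l P` gives a nonzero constant exponential. -/
lemma drop_lemma (l : ℂ) (hl : l ≠ 0) :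
    ∀ s (P : ℂ[X]), P ≠ 0 → P.natDegree = s →
    ∃ c : ℂ, c ≠ 0 ∧ (aeval Esh ((X - C l) ^ s)) (expp l P) = expp l (C c) := by
  intro s
  induction s with
  | zero =>
    intro P hP h0
    refine ⟨P.coeff 0, ?_, ?_⟩
    · intro h
      exact hP (by rw [Polynomial.eq_C_of_natDegree_eq_zero h0, h, map_zero])
    · rw [pow_zero, map_one, Module.End.one_apply]
      exact congrArg (expp l) (Polynomial.eq_C_of_natDegree_eq_zero h0)
  | succ s ih =>
    intro P hP h0
    obtain ⟨hdeg, hne⟩ := Dl_exact l hl P s h0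
    obtain ⟨c, hc, hc2⟩ := ih (Dl l P) hne hdeg
    refine ⟨c, hc, ?_⟩
    rw [pow_succ, map_mul, Module.End.mul_apply, aeval_sub_expp_self, hc2]

lemma kill_lemma (l : ℂ) (hl : l ≠ 0) (P : ℂ[X]) :
    (aeval Esh ((X - C l) ^ (P.natDegree + 1))) (expp l P) = 0 := by
  by_cases hP : P = 0
  · rw [hP]
    rw [expp_zero]
    exact map_zero _
  · obtain ⟨c, hc, hc2⟩ := drop_lemma l hl P.natDegree P hP rfl
    rw [pow_succ, mul_comm, map_mul, Module.End.mul_apply, hc2, aeval_sub_expp_self]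
    have : Dl l (C c) = 0 := by
      rw [Dl, Polynomial.C_comp, sub_self]
    rw [this, expp_zero]

lemma aeval_expp_C (V : ℂ[X]) (l c : ℂ) (n : ℕ) :
    (aeval Esh V) (expp l (C c)) n = c * l ^ n * V.eval l := by
  rw [aeval_Esh_apply, Polynomial.eval_eq_sum_range, Finset.mul_sum]
  refine Finset.sum_congr rfl fun b _ => ?_
  simp only [expp, Polynomial.eval_C, pow_add]
  ring

/-- A sequence satisfying a monic recurrence with `d` initial zeros is zero. -/
lemma zero_prop (g : ℕ → ℂ) (d : ℕ) (Q : ℂ[X]) (hQd : Q.natDegree = d) (hmon : Q.Monic)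
    (h0 : ∀ n < d, g n = 0) (hrec : (aeval Esh Q) g = 0) : ∀ n, g n = 0 := by
  intro n
  induction n using Nat.strong_induction_on with
  | _ n ih =>
    rcases lt_or_ge n d with h | h
    · exact h0 n h
    · have h1 : (aeval Esh Q) g (n - d) = 0 := by rw [hrec]; rfl
      rw [aeval_Esh_apply, hQd, Finset.sum_range_succ] at h1
      rw [Finset.sum_eq_zero, zero_add] at h1
      · have hcd : Q.coeff d = 1 := by
          have := hmon.coeff_natDegree
          rwa [hQd] at this
        rw [hcd, one_mul, Nat.sub_add_cancel h] at h1
        exact h1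
      · intro b hb
        have hb' := Finset.mem_range.mp hb
        rw [ih (n - d + b) (by omega), mul_zero]

lemma kill_dvd (l : ℂ) (hl : l ≠ 0) (P W : ℂ[X])
    (hdvd : (X - C l) ^ (P.natDegree + 1) ∣ W) :
    (aeval Esh W) (expp l P) = 0 := by
  obtain ⟨A, hA⟩ := hdvd
  rw [hA, mul_comm, map_mul, Module.End.mul_apply, kill_lemma l hl, map_zero]

lemma dvd_of_ann (m : ℕ) (lam : Fin m → ℂ) (P : Fin m → Polynomial ℂ)
    (hinj : Function.Injective lam) (hne : ∀ k, lam k ≠ 0) (hP : ∀ k, P k ≠ 0)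
    (f₂ : ℕ → ℂ) (hf₂ : f₂ = ∑ k, expp (lam k) (P k))
    (R : Polynomial ℂ) (hR : (aeval Esh R) f₂ = 0) :
    (∏ k, (X - C (lam k)) ^ ((P k).natDegree + 1)) ∣ R := by
  set fac : Fin m → ℂ[X] := fun k => (X - C (lam k)) ^ ((P k).natDegree + 1) with hfac
  refine Fintype.prod_dvd_of_coprime ?_ fun k => ?_
  · intro i j hij
    exact ((Polynomial.pairwise_coprime_X_sub_C hinj) hij).pow
  -- show fac k ∣ R
  by_cases hR0 : R = 0
  · rw [hR0]; exact dvd_zero _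
  by_contra hnd
  set t := rootMultiplicity (lam k) R with htdef
  have ht : t ≤ (P k).natDegree := by
    by_contra h
    exact hnd (dvd_trans (pow_dvd_pow _ (by omega)) (R.pow_rootMultiplicity_dvd (lam k)))
  set S := R /ₘ (X - C (lam k)) ^ t with hSdef
  have hRS : (X - C (lam k)) ^ t * S = R := R.pow_mul_divByMonic_rootMultiplicity_eq (lam k)
  have hSev : S.eval (lam k) ≠ 0 :=
    Polynomial.eval_divByMonic_pow_rootMultiplicity_ne_zero (lam k) hR0
  set pr : ℂ[X] := ∏ j ∈ Finset.univ.erase k, fac j with hpr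
  set V := S * pr with hV
  set W := (X - C (lam k)) ^ ((P k).natDegree - t) * pr with hW
  have hWR : W * R = (X - C (lam k)) ^ (P k).natDegree * V := by
    rw [← hRS, hW, hV]
    have : (X - C (lam k)) ^ ((P k).natDegree - t) * pr * ((X - C (lam k)) ^ t * S)
        = ((X - C (lam k)) ^ ((P k).natDegree - t) * (X - C (lam k)) ^ t) * (S * pr) := by ring
    rw [this, ← pow_add, Nat.sub_add_cancel ht]
  have h0 : (aeval Esh (W * R)) f₂ = 0 := by
    rw [map_mul, Module.End.mul_apply, hR, map_zero]
  have hfacdvd : ∀ j, j ≠ k → fac j ∣ W * R := by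
    intro j hj
    refine dvd_mul_of_dvd_left ?_ R
    rw [hW]
    exact dvd_mul_of_dvd_right (Finset.dvd_prod_of_mem fac (by simp [hj])) _
  have h1 : (aeval Esh (W * R)) (expp (lam k) (P k)) = 0 := by
    have hsum : (aeval Esh (W * R)) f₂
        = ∑ j, (aeval Esh (W * R)) (expp (lam j) (P j)) := by
      rw [hf₂, map_sum]
    rw [h0] at hsum
    have hothers : ∀ j ∈ Finset.univ.erase k, (aeval Esh (W * R)) (expp (lam j) (P j)) = 0 := by
      intro j hj
      exact kill_dvd (lam j) (hne j) (P j) _ (hfacdvd j (Finset.mem_erase.mp hj).1)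
    rw [← Finset.add_sum_erase _ _ (Finset.mem_univ k), Finset.sum_eq_zero hothers,
      add_zero] at hsum
    exact hsum.symm
  -- compute the value at 0
  obtain ⟨c, hc, hdrop⟩ := drop_lemma (lam k) (hne k) (P k).natDegree (P k) (hP k) rfl
  have h2 : (aeval Esh (W * R)) (expp (lam k) (P k)) 0 = c * V.eval (lam k) := by
    rw [hWR, mul_comm, map_mul, Module.End.mul_apply, hdrop, aeval_expp_C]
    ring
  have hVev : V.eval (lam k) ≠ 0 := by
    rw [hV, Polynomial.eval_mul]
    refine mul_ne_zero hSev ?_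
    rw [hpr, Polynomial.eval_prod]
    refine Finset.prod_ne_zero_iff.mpr fun j hj => ?_
    rw [hfac]
    simp only [Polynomial.eval_pow, Polynomial.eval_sub, Polynomial.eval_X, Polynomial.eval_C]
    exact pow_ne_zero _ (sub_ne_zero.mpr fun h => (Finset.mem_erase.mp hj).1 (hinj h.symm))
  rw [h1] at h2
  exact hVev (by simpa [hc] using h2.symm)

noncomputable def hinnerL {L : ℕ} (u : Fin L → ℂ) : (Fin L → ℂ) →ₗ[ℂ] ℂ where
  toFun v := ∑ i, (starRingEnd ℂ) (u i) * v i
  map_add' v w := by simp [mul_add, Finset.sum_add_distrib]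
  map_smul' c v := by
    simp only [Pi.smul_apply, smul_eq_mul, RingHom.id_apply, Finset.mul_sum]
    exact Finset.sum_congr rfl fun i _ => by ring

lemma hinnerL_apply {L : ℕ} (u v : Fin L → ℂ) : hinnerL u v = hinner u v := rfl

lemma hinner_conj_iff {L : ℕ} (u v : Fin L → ℂ) : hinner u v = 0 ↔ hinner v u = 0 := by
  have h : hinner v u = (starRingEnd ℂ) (hinner u v) := by
    simp only [hinner, map_sum, map_mul, RingHomCompTriple.comp_apply, RingHom.id_apply,
      Complex.conj_conj]
    exact Finset.sum_congr rfl fun i _ => by ring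
  rw [h]
  constructor
  · intro h0; rw [h0, map_zero]
  · intro h0
    have := congrArg (starRingEnd ℂ) h0
    rwa [Complex.conj_conj, map_zero] at this

lemma aeval_genpoly (Lp : ℕ) (c : Fin Lp → ℂ) (f : ℕ → ℂ) (n : ℕ) :
    (aeval Esh (∑ k : Fin Lp, C (c k) * X ^ (k : ℕ))) f n = ∑ k : Fin Lp, c k * f (n + k) := by
  rw [map_sum, LinearMap.coe_sum, Finset.sum_apply, Finset.sum_apply]
  refine Finset.sum_congr rfl fun k _ => ?_
  rw [map_mul, aeval_C, aeval_X_pow, Module.End.mul_apply]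
  have h1 : (Esh ^ (k : ℕ)) f n = f (n + k) := Esh_pow_apply _ f n
  rw [Module.algebraMap_end_apply, Pi.smul_apply, smul_eq_mul, h1]
/-- Separability criterion: a nonzero series `f₁` and a series `f₂` of difference
dimension `d` with characteristic polynomial `Q`, `d < L ≤ N - d + 1`, are weakly
left-separable iff `Q` divides the conjugate generating polynomial of every
element of a basis of the trajectory space of `f₁`. -/
theorem left_separable_iff_charpoly_dvd_basis
    (N L : ℕ) (f₁ f₂ : ℕ → ℂ) (hf₁ : ∃ n, n < N ∧ f₁ n ≠ 0)
    (m : ℕ) (lam : Fin m → ℂ) (P : Fin m → Polynomial ℂ)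
    (hinj : Function.Injective lam) (hne : ∀ k, lam k ≠ 0) (hP : ∀ k, P k ≠ 0)
    (hf₂ : ∀ n : ℕ, f₂ n = ∑ k, (P k).eval (n : ℂ) * lam k ^ n)
    (Q : Polynomial ℂ) (hQ : Q = ∏ k, (X - C (lam k)) ^ ((P k).natDegree + 1))
    (d : ℕ) (hd : d = Q.natDegree)
    (hdN : 2 * d ≤ N) (hdL : d < L) (hLN : L + d ≤ N + 1)
    (r : ℕ) (U : Fin r → (Fin L → ℂ))
    (hU : LinearIndependent ℂ U)
    (hUspan : Submodule.span ℂ (Set.range U) = trajSpace f₁ N L) :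
    (∀ u ∈ trajSpace f₁ N L, ∀ v ∈ trajSpace f₂ N L, hinner u v = 0) ↔
      ∀ i : Fin r, Q ∣ ∑ k : Fin L, C ((starRingEnd ℂ) (U i k)) * X ^ (k : ℕ) := by
  -- f₂ as a sum of exponential-polynomials
  have hf₂fun : f₂ = ∑ k, expp (lam k) (P k) := by
    funext n
    rw [hf₂, Finset.sum_apply]
    rfl
  have hQmon : Q.Monic := by
    rw [hQ]; exact monic_prod_of_monic _ _ fun k _ => (monic_X_sub_C _).pow _
  have hQne : Q ≠ 0 := hQmon.ne_zero
  have hQann : (aeval Esh Q) f₂ = 0 := by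
    rw [hf₂fun, map_sum]
    refine Finset.sum_eq_zero fun k _ => ?_
    exact kill_dvd (lam k) (hne k) (P k) Q
      (hQ ▸ Finset.dvd_prod_of_mem _ (Finset.mem_univ k))
  -- the key criterion for a single polynomial
  have key : ∀ B : ℂ[X], (∀ n, n + L ≤ N → (aeval Esh B) f₂ n = 0) ↔ Q ∣ B := by
    intro B
    constructor
    · intro hB
      have hrec : (aeval Esh Q) ((aeval Esh B) f₂) = 0 := by
        rw [← Module.End.mul_apply, ← map_mul, mul_comm, map_mul, Module.End.mul_apply,
          hQann, map_zero]
      have hg : (aeval Esh B) f₂ = 0 := by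
        funext n
        refine zero_prop _ d Q hd.symm hQmon (fun n' hn' => hB n' (by omega)) hrec n
      have hmod : (aeval Esh (B %ₘ Q)) f₂ = 0 := by
        have hm : B %ₘ Q = B - Q * (B /ₘ Q) :=
          eq_sub_of_add_eq (Polynomial.modByMonic_add_div B Q)
        rw [hm, map_sub, LinearMap.sub_apply, hg, mul_comm, map_mul, Module.End.mul_apply,
          hQann, map_zero, sub_zero]
      have hQR : Q ∣ B %ₘ Q := by
        have := dvd_of_ann m lam P hinj hne hP f₂ hf₂fun _ hmod
        rwa [← hQ] at this
      have hR0 : B %ₘ Q = 0 := by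
        by_contra h
        have hlt := Polynomial.degree_modByMonic_lt B hQmon
        exact absurd hlt (not_lt.mpr (Polynomial.degree_le_of_dvd hQR h))
      refine ⟨B /ₘ Q, ?_⟩
      conv_lhs => rw [← Polynomial.modByMonic_add_div B Q]
      rw [hR0, zero_add]
    · rintro ⟨S, hS⟩ n _
      rw [hS, mul_comm, map_mul, Module.End.mul_apply, hQann, map_zero]
      rfl
  -- bridging between inner products and polynomial evaluations
  have hlag : ∀ (u : Fin L → ℂ) (n : ℕ),
      hinner u (fun j : Fin L => f₂ (n + (j : ℕ)))
        = (aeval Esh (∑ k : Fin L, C ((starRingEnd ℂ) (u k)) * X ^ (k : ℕ))) f₂ n := by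
    intro u n
    rw [aeval_genpoly]
    rfl
  constructor
  · intro hO i
    rw [← key]
    intro n hn
    have hu : U i ∈ trajSpace f₁ N L := by
      rw [← hUspan]; exact Submodule.subset_span (Set.mem_range_self i)
    have hv : (fun j : Fin L => f₂ (n + (j : ℕ))) ∈ trajSpace f₂ N L :=
      Submodule.subset_span ⟨n, hn, rfl⟩
    have := hO _ hu _ hv
    rwa [hlag] at this
  · intro hdvd u hu v hv
    have claim : ∀ n, n + L ≤ N → hinner u (fun j : Fin L => f₂ (n + (j : ℕ))) = 0 := by
      intro n hn
      rw [hinner_conj_iff]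
      have hle : trajSpace f₁ N L ≤
          LinearMap.ker (hinnerL (fun j : Fin L => f₂ (n + (j : ℕ)))) := by
        rw [← hUspan, Submodule.span_le]
        rintro _ ⟨i, rfl⟩
        simp only [SetLike.mem_coe, LinearMap.mem_ker]
        rw [hinnerL_apply, ← hinner_conj_iff, hlag]
        exact (key _).mpr (hdvd i) n hn
      have := hle hu
      rwa [LinearMap.mem_ker, hinnerL_apply] at this
    have hle2 : trajSpace f₂ N L ≤ LinearMap.ker (hinnerL u) := by
      rw [trajSpace, Submodule.span_le]
      rintro _ ⟨n, hn, rfl⟩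
      simp only [SetLike.mem_coe, LinearMap.mem_ker]
      rw [hinnerL_apply]
      exact claim n hn
    have := hle2 hv
    rwa [LinearMap.mem_ker, hinnerL_apply] at this
end

section
/- Let F_N^{(1)} be the constant series f_n ≡ c ≠ 0 and L ≤ N/2. A nonzero time series F_N^{(2)} of finite difference dimension is left-separable from F_N^{(1)} if and only if f^{(2)}_n = Σ_{k=1}^{L-1} c_k exp(2πik n/L) for some constants c_k ∈ ℂ not all zero; equivalently, F^{(2)} is L-periodic with Σ_{n=0}^{L-1} f^{(2)}_n = 0. -/
open Polynomial Finset Real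

noncomputable def shiftL : (ℕ → ℂ) →ₗ[ℂ] (ℕ → ℂ) where
  toFun f := fun n => f (n+1)
  map_add' := by intros; rfl
  map_smul' := by intros; rfl

lemma shiftL_pow_apply (j : ℕ) (f : ℕ → ℂ) (n : ℕ) : (shiftL ^ j) f n = f (n + j) := by
  induction j generalizing f n with
  | zero => rfl
  | succ j ih =>
    rw [pow_succ, Module.End.mul_apply]
    show (shiftL ^ j) _ n = _
    rw [ih]
    show f (n + j + 1) = f (n + (j+1)); ring_nf

lemma aeval_shiftL_apply (Q : Polynomial ℂ) (f : ℕ → ℂ) (n : ℕ) :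
    (aeval shiftL Q) f n = ∑ j ∈ Finset.range (Q.natDegree + 1), Q.coeff j * f (n + j) := by
  rw [aeval_eq_sum_range]
  rw [LinearMap.sum_apply]
  rw [Finset.sum_apply]
  refine Finset.sum_congr rfl fun j _ => ?_
  rw [LinearMap.smul_apply]
  show Q.coeff j * (shiftL ^ j) f n = _
  rw [shiftL_pow_apply]

noncomputable def efn (p : Polynomial ℂ) (a : ℂ) : ℕ → ℂ := fun n => p.eval (n : ℂ) * a ^ n

lemma efn_step (p : Polynomial ℂ) (a μ : ℂ) :
    (aeval shiftL (X - C μ)) (efn p a) = efn (a • p.comp (X + 1) - μ • p) a := by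
  funext n
  rw [map_sub, aeval_X, aeval_C]
  show shiftL (efn p a) n - (algebraMap ℂ (Module.End ℂ (ℕ → ℂ)) μ) (efn p a) n = _
  have h1 : shiftL (efn p a) n = p.eval ((n:ℂ)+1) * a ^ (n+1) := by
    show p.eval ((n+1 : ℕ) : ℂ) * a ^ (n+1) = _
    push_cast; ring_nf
  have h2 : (algebraMap ℂ (Module.End ℂ (ℕ → ℂ)) μ) (efn p a) n = μ * (p.eval (n:ℂ) * a ^ n) := by
    rw [Module.algebraMap_end_apply]; rfl
  rw [h1, h2]
  simp only [efn, eval_sub, eval_smul, eval_comp, eval_add, eval_X, eval_one, smul_eq_mul]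
  ring

lemma comp_sub_drop (p : Polynomial ℂ) :
    p.comp (X + 1) - p = 0 ∨ (p.comp (X + 1) - p).natDegree < p.natDegree := by
  by_cases h0 : p.comp (X + 1) - p = 0
  · exact Or.inl h0
  · right
    have hp : p ≠ 0 := by rintro rfl; simp at h0
    have hX1 : (X + 1 : Polynomial ℂ).natDegree = 1 := by
      have := natDegree_X_add_C (1 : ℂ); simpa using this
    have hcompdeg : (p.comp (X + 1)).natDegree = p.natDegree := by
      rw [natDegree_comp, hX1, mul_one]
    have hlc : (p.comp (X + 1)).leadingCoeff = p.leadingCoeff := by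
      rw [leadingCoeff_comp (by rw [hX1]; norm_num)]
      have : (X + 1 : Polynomial ℂ).leadingCoeff = 1 := by
        have := monic_X_add_C (1 : ℂ); simpa [Monic] using this
      rw [this, one_pow, mul_one]
    have hcompne : p.comp (X + 1) ≠ 0 := by
      rw [← leadingCoeff_ne_zero, hlc, leadingCoeff_ne_zero]; exact hp
    have hdeg : (p.comp (X + 1)).degree = p.degree := by
      rw [degree_eq_natDegree hcompne, degree_eq_natDegree hp, hcompdeg]
    have hlt : (p.comp (X + 1) - p).degree < (p.comp (X + 1)).degree :=
      degree_sub_lt hdeg hcompne hlc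
    have := natDegree_lt_natDegree h0 hlt
    rwa [hcompdeg] at this

lemma kill_lemma_s11 (a : ℂ) : ∀ (d : ℕ) (p : Polynomial ℂ), p.natDegree < d →
    (aeval shiftL ((X - C a) ^ d)) (efn p a) = 0 := by
  intro d
  induction d with
  | zero => intro p h; omega
  | succ d ih =>
    intro p h
    rw [pow_succ, map_mul, Module.End.mul_apply, efn_step]
    have hq : a • p.comp (X + 1) - a • p = a • (p.comp (X + 1) - p) := by
      rw [smul_sub]
    rw [hq]
    rcases comp_sub_drop p with h0 | hlt
    · rw [h0, smul_zero]
      have : efn 0 a = 0 := by funext n; simp [efn]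
      rw [this, map_zero]
    · apply ih
      have h1 := natDegree_smul_le a (p.comp (X + 1) - p)
      omega

lemma preserve_step (a μ : ℂ) (ha : a ≠ 0) (hμ : μ ≠ a) (p : Polynomial ℂ) (hp : p ≠ 0) :
    a • p.comp (X + 1) - μ • p ≠ 0 := by
  intro h
  have hX1 : (X + 1 : Polynomial ℂ).natDegree = 1 := by
    have := natDegree_X_add_C (1 : ℂ); simpa using this
  have hcompdeg : (p.comp (X + 1)).natDegree = p.natDegree := by
    rw [natDegree_comp, hX1, mul_one]
  have hlc : (p.comp (X + 1)).leadingCoeff = p.leadingCoeff := by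
    rw [leadingCoeff_comp (by rw [hX1]; norm_num)]
    have : (X + 1 : Polynomial ℂ).leadingCoeff = 1 := by
      have := monic_X_add_C (1 : ℂ); simpa [Monic] using this
    rw [this, one_pow, mul_one]
  have hcoeff : (a • p.comp (X + 1) - μ • p).coeff p.natDegree = (a - μ) * p.leadingCoeff := by
    rw [coeff_sub, coeff_smul, coeff_smul]
    have h1 : (p.comp (X + 1)).coeff p.natDegree = p.leadingCoeff := by
      rw [← hlc, ← hcompdeg]; rfl
    rw [h1]
    show a * p.leadingCoeff - μ * p.coeff p.natDegree = _
    rw [coeff_natDegree]; ring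
  rw [h, coeff_zero] at hcoeff
  have := mul_ne_zero (sub_ne_zero.mpr (Ne.symm hμ)) (leadingCoeff_ne_zero.mpr hp)
  exact this hcoeff.symm

lemma preserve_pow (a μ : ℂ) (ha : a ≠ 0) (hμ : μ ≠ a) :
    ∀ (d : ℕ) (p : Polynomial ℂ), p ≠ 0 →
    ∃ q : Polynomial ℂ, q ≠ 0 ∧ (aeval shiftL ((X - C μ) ^ d)) (efn p a) = efn q a := by
  intro d
  induction d with
  | zero => intro p hp; exact ⟨p, hp, by rw [pow_zero, map_one, Module.End.one_apply]⟩
  | succ d ih =>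
    intro p hp
    obtain ⟨q, hq, hq2⟩ := ih (a • p.comp (X + 1) - μ • p) (preserve_step a μ ha hμ p hp)
    refine ⟨q, hq, ?_⟩
    rw [pow_succ, map_mul, Module.End.mul_apply, efn_step, hq2]

lemma preserve_prod {ι : Type*} [DecidableEq ι] (a : ℂ) (ha : a ≠ 0) (s : Finset ι)
    (μ : ι → ℂ) (dd : ι → ℕ) (hμ : ∀ j ∈ s, μ j ≠ a) :
    ∀ (p : Polynomial ℂ), p ≠ 0 →
    ∃ q : Polynomial ℂ, q ≠ 0 ∧
      (aeval shiftL (∏ j ∈ s, (X - C (μ j)) ^ dd j)) (efn p a) = efn q a := by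
  induction s using Finset.induction_on with
  | empty => intro p hp; exact ⟨p, hp, by rw [Finset.prod_empty, map_one, Module.End.one_apply]⟩
  | @insert j s hjs ih =>
    intro p hp
    obtain ⟨q, hq, hq2⟩ := preserve_pow a (μ j) ha (hμ j (Finset.mem_insert_self j s)) (dd j) p hp
    obtain ⟨r, hr, hr2⟩ := ih (fun i hi => hμ i (Finset.mem_insert_of_mem hi)) q hq
    refine ⟨r, hr, ?_⟩
    rw [Finset.prod_insert hjs]
    rw [mul_comm, map_mul, Module.End.mul_apply, hq2, hr2]

lemma exp_poly_ne_zero {m : ℕ} (hm : 0 < m) (lam : Fin m → ℂ) (P : Fin m → Polynomial ℂ)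
    (hinj : Function.Injective lam) (hne : ∀ k, lam k ≠ 0) (hP : ∀ k, P k ≠ 0) :
    ∃ n : ℕ, (∑ k, (P k).eval (n:ℂ) * lam k ^ n) ≠ 0 := by
  by_contra h
  push_neg at h
  set k₀ : Fin m := ⟨0, hm⟩ with hk₀
  set s : Finset (Fin m) := Finset.univ.erase k₀ with hs
  set T : Polynomial ℂ := ∏ j ∈ s, (X - C (lam j)) ^ ((P j).natDegree + 1) with hT
  have hF : (∑ k, efn (P k) (lam k)) = (0 : ℕ → ℂ) := by
    funext n
    rw [Finset.sum_apply]
    exact h n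
  have hA : (aeval shiftL T) (∑ k, efn (P k) (lam k)) = 0 := by rw [hF, map_zero]
  rw [map_sum] at hA
  have hkill : ∀ k ∈ s, (aeval shiftL T) (efn (P k) (lam k)) = 0 := by
    intro k hk
    rw [hT, ← Finset.prod_erase_mul s _ hk, map_mul, Module.End.mul_apply,
      kill_lemma_s11 (lam k) _ (P k) (by omega), map_zero]
  have hsum : (aeval shiftL T) (efn (P k₀) (lam k₀)) = 0 := by
    rw [← hA]
    symm
    apply Finset.sum_eq_single_of_mem k₀ (Finset.mem_univ k₀)
    intro k _ hkne
    exact hkill k (Finset.mem_erase.mpr ⟨hkne, Finset.mem_univ k⟩)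
  obtain ⟨q, hq, hq2⟩ := preserve_prod (lam k₀) (hne k₀) s lam
    (fun j => (P j).natDegree + 1)
    (fun j hj => fun he => (Finset.mem_erase.mp hj).1 (hinj he)) (P k₀) (hP k₀)
  rw [hq2] at hsum
  apply hq
  apply Polynomial.eq_zero_of_infinite_isRoot
  apply Set.infinite_of_injective_forall_mem (f := fun n : ℕ => (n : ℂ)) Nat.cast_injective
  intro n
  have := congrFun hsum n
  simp only [efn, Pi.zero_apply] at this
  have hpow : lam k₀ ^ n ≠ 0 := pow_ne_zero _ (hne k₀)
  exact (mul_eq_zero.mp this).resolve_right hpow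

lemma vanish_of_rec (Q : Polynomial ℂ) (hQ : Q.Monic) (g : ℕ → ℂ)
    (hann : (aeval shiftL Q) g = 0) (h0 : ∀ i < Q.natDegree, g i = 0) : ∀ n, g n = 0 := by
  intro n
  induction n using Nat.strong_induction_on with
  | _ n ih =>
    by_cases hn : n < Q.natDegree
    · exact h0 n hn
    · push_neg at hn
      set i := n - Q.natDegree with hi
      have hrec := congrFun hann i
      rw [aeval_shiftL_apply, Finset.sum_range_succ] at hrec
      have hz : ∀ j ∈ Finset.range Q.natDegree, Q.coeff j * g (i + j) = 0 := by
        intro j hj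
        rw [Finset.mem_range] at hj
        rw [ih (i + j) (by omega), mul_zero]
      rw [Finset.sum_eq_zero hz, zero_add, hQ.coeff_natDegree, one_mul] at hrec
      have : i + Q.natDegree = n := by omega
      rw [this] at hrec
      exact hrec

lemma geom_zero {L : ℕ} {ζ : ℂ} (h1 : ζ ≠ 1) (hL : ζ ^ L = 1) :
    ∑ k ∈ Finset.range L, ζ ^ k = 0 := by
  rw [geom_sum_eq h1, hL]; simp

noncomputable def omC (L : ℕ) : ℂ := Complex.exp (2 * π * Complex.I / L)

lemma omC_ne_zero (L : ℕ) : omC L ≠ 0 := Complex.exp_ne_zero _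

lemma omC_pow_L {L : ℕ} (hL : 0 < L) : omC L ^ L = 1 := by
  rw [omC, ← Complex.exp_nat_mul]
  have hL0 : (L : ℂ) ≠ 0 := Nat.cast_ne_zero.mpr hL.ne'
  have : (L : ℂ) * (2 * π * Complex.I / L) = 2 * π * Complex.I := by field_simp
  rw [this, Complex.exp_two_pi_mul_I]

lemma exp_eq_omC_pow {L : ℕ} (k : ℕ) :
    Complex.exp (2 * π * Complex.I * k / L) = omC L ^ k := by
  rw [omC, ← Complex.exp_nat_mul]
  congr 1
  ring

lemma two_pi_I_ne_zero : (2 : ℂ) * π * Complex.I ≠ 0 := by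
  simp [Real.pi_ne_zero, Complex.I_ne_zero, Complex.ofReal_ne_zero]

lemma omC_pow_inj {L : ℕ} (hL : 0 < L) {i n : ℕ} (hi : i < L) (hn : n < L)
    (h : omC L ^ i = omC L ^ n) : i = n := by
  have hL0 : (L : ℂ) ≠ 0 := Nat.cast_ne_zero.mpr hL.ne'
  rw [omC, ← Complex.exp_nat_mul, ← Complex.exp_nat_mul,
    Complex.exp_eq_exp_iff_exists_int] at h
  obtain ⟨t, ht⟩ := h
  have h3 : (i : ℂ) = (n : ℂ) + t * L := by
    field_simp at ht
    have h2 : (i:ℂ) * (2 * π * Complex.I) = ((n:ℂ) + t * L) * (2 * π * Complex.I) := by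
      linear_combination (2 * π * Complex.I) * ht
    exact mul_right_cancel₀ two_pi_I_ne_zero h2
  have h4 : (i : ℤ) = (n : ℤ) + t * L := by exact_mod_cast h3
  have hLZ : (0:ℤ) < L := by exact_mod_cast hL
  have hiZ : (i:ℤ) < L := by exact_mod_cast hi
  have hnZ : (n:ℤ) < L := by exact_mod_cast hn
  have h5 : -(L:ℤ) < t * L := by linarith [h4, hnZ, Int.ofNat_nonneg i]
  have h6 : t * L < L := by linarith [h4, hiZ, Int.ofNat_nonneg n]
  have ht : t = 0 := by
    by_contra ht0
    rcases lt_or_gt_of_ne ht0 with h | h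
    · have : t ≤ -1 := by omega
      nlinarith
    · have : 1 ≤ t := by omega
      nlinarith
  rw [ht] at h4
  simp at h4
  omega

lemma periodic_mod {f : ℕ → ℂ} {L : ℕ} (hL : 0 < L) (hper : ∀ n, f (n + L) = f n) :
    ∀ n, f n = f (n % L) := by
  intro n
  induction n using Nat.strong_induction_on with
  | _ n ih =>
    by_cases hn : n < L
    · rw [Nat.mod_eq_of_lt hn]
    · push_neg at hn
      have h1 : f n = f (n - L) := by
        have := hper (n - L)
        rwa [Nat.sub_add_cancel hn] at this
      rw [h1, ih (n - L) (by omega), Nat.mod_eq_sub_mod hn]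


/-- A nonzero series of finite difference dimension is left-separable from the
constant series `f₁ ≡ c ≠ 0` (with `L ≤ N/2`) iff it is a combination of the
exponentials `exp(2πik/L)ⁿ`, `0 < k < L`; equivalently, iff it is `L`-periodic
with zero sum over a period. -/
theorem left_separable_from_constant_iff
    (N L : ℕ) (hL : 1 < L) (hLN : 2 * L ≤ N)
    (c : ℂ) (hc : c ≠ 0) (f₁ : ℕ → ℂ) (hf₁ : ∀ n, f₁ n = c)
    (f₂ : ℕ → ℂ) (m : ℕ) (hm : 0 < m) (lam : Fin m → ℂ) (P : Fin m → Polynomial ℂ)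
    (hinj : Function.Injective lam) (hne : ∀ k, lam k ≠ 0) (hP : ∀ k, P k ≠ 0)
    (hf₂ : ∀ n : ℕ, f₂ n = ∑ k, (P k).eval (n : ℂ) * lam k ^ n)
    (hdN : 2 * (∑ k, ((P k).natDegree + 1)) ≤ N) :
    ((∀ u ∈ trajSpace f₁ N L, ∀ v ∈ trajSpace f₂ N L, hinner u v = 0) ↔
      ∃ c₂ : ℕ → ℂ, (∃ k, 0 < k ∧ k < L ∧ c₂ k ≠ 0) ∧
        ∀ n : ℕ, f₂ n = ∑ k ∈ Finset.Ico 1 L,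
          c₂ k * (Complex.exp (2 * π * Complex.I * k / L)) ^ n) ∧
    ((∀ u ∈ trajSpace f₁ N L, ∀ v ∈ trajSpace f₂ N L, hinner u v = 0) ↔
      ((∀ n : ℕ, f₂ (n + L) = f₂ n) ∧ ∑ n ∈ Finset.range L, f₂ n = 0)) := by
  have hL0 : 0 < L := by omega
  set d : ℕ := ∑ k, ((P k).natDegree + 1) with hd
  have hdL : d + L ≤ N := by omega
  set g : ℕ → ℂ := fun n => ∑ j ∈ Finset.range L, f₂ (n + j) with hg
  -- key identity
  have key : ∀ n, g (n + 1) + f₂ n = g n + f₂ (n + L) := by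
    intro n
    have e1 : g n + f₂ (n + L) = ∑ j ∈ Finset.range (L + 1), f₂ (n + j) := by
      simp only [hg]; rw [Finset.sum_range_succ]
    have e2 : g (n + 1) + f₂ n = ∑ j ∈ Finset.range (L + 1), f₂ (n + j) := by
      simp only [hg]
      rw [Finset.sum_range_succ', Nat.add_zero]
      exact congrArg₂ (· + ·) (Finset.sum_congr rfl fun j _ => congrArg f₂ (by omega)) rfl
    rw [e1, e2]
  -- g ≡ 0 iff B
  have gzero_iff_B : (∀ n, g n = 0) ↔
      ((∀ n : ℕ, f₂ (n + L) = f₂ n) ∧ ∑ n ∈ Finset.range L, f₂ n = 0) := by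
    constructor
    · intro hz
      constructor
      · intro n
        have hk := key n
        rw [hz n, hz (n + 1), zero_add, zero_add] at hk
        exact hk.symm
      · have := hz 0
        simp only [hg] at this
        simpa using this
    · rintro ⟨hper, hsum⟩ n
      induction n with
      | zero => simp only [hg]; simpa using hsum
      | succ n ih =>
        have hk := key n
        rw [ih, hper n, zero_add] at hk
        linear_combination hk
  -- orthogonality iff boundary vanishing of g
  have ortho_iff : (∀ u ∈ trajSpace f₁ N L, ∀ v ∈ trajSpace f₂ N L, hinner u v = 0) ↔
      (∀ i : ℕ, i + L ≤ N → g i = 0) := by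
    constructor
    · intro h i hiL
      have hu : (fun _ : Fin L => c) ∈ trajSpace f₁ N L :=
        Submodule.subset_span ⟨0, by omega, by funext j; rw [hf₁]⟩
      have hv : (fun j : Fin L => f₂ (i + (j : ℕ))) ∈ trajSpace f₂ N L :=
        Submodule.subset_span ⟨i, hiL, rfl⟩
      have h0 := h _ hu _ hv
      simp only [hinner] at h0
      rw [← Finset.mul_sum] at h0
      have hcc : (starRingEnd ℂ) c ≠ 0 := by simpa using hc
      have hs := (mul_eq_zero.mp h0).resolve_left hcc
      simp only [hg]
      rw [← Fin.sum_univ_eq_sum_range (fun t => f₂ (i + t)) L]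
      exact hs
    · intro hgz u hu
      refine Submodule.span_induction
        (p := fun u _ => ∀ v ∈ trajSpace f₂ N L, hinner u v = 0) ?_ ?_ ?_ ?_ hu
      · rintro x ⟨i, hiN, rfl⟩ v hv
        refine Submodule.span_induction
          (p := fun v _ => hinner (fun j : Fin L => f₁ (i + (j : ℕ))) v = 0) ?_ ?_ ?_ ?_ hv
        · rintro y ⟨i', hi'N, rfl⟩
          show ∑ j : Fin L, (starRingEnd ℂ) (f₁ (i + (j : ℕ))) * f₂ (i' + (j : ℕ)) = 0
          simp only [hf₁]
          rw [← Finset.mul_sum, Fin.sum_univ_eq_sum_range (fun t => f₂ (i' + t)) L]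
          have := hgz i' hi'N
          simp only [hg] at this
          rw [this, mul_zero]
        · simp [hinner]
        · intro x y _ _ hx0 hy0
          have : hinner (fun j : Fin L => f₁ (i + (j : ℕ))) (x + y)
              = hinner (fun j : Fin L => f₁ (i + (j : ℕ))) x
              + hinner (fun j : Fin L => f₁ (i + (j : ℕ))) y := by
            simp [hinner, mul_add, Finset.sum_add_distrib]
          rw [this, hx0, hy0, add_zero]
        · intro a x _ hx0
          have : hinner (fun j : Fin L => f₁ (i + (j : ℕ))) (a • x)
              = a * hinner (fun j : Fin L => f₁ (i + (j : ℕ))) x := by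
            simp only [hinner, Pi.smul_apply, smul_eq_mul, Finset.mul_sum]
            exact Finset.sum_congr rfl fun j _ => by ring
          rw [this, hx0, mul_zero]
      · intro v _; simp [hinner]
      · intro x y _ _ hx0 hy0 v hv
        have : hinner (x + y) v = hinner x v + hinner y v := by
          simp [hinner, add_mul, Finset.sum_add_distrib]
        rw [this, hx0 v hv, hy0 v hv, add_zero]
      · intro a x _ hx0 v hv
        have : hinner (a • x) v = (starRingEnd ℂ) a * hinner x v := by
          simp only [hinner, Pi.smul_apply, smul_eq_mul, map_mul, Finset.mul_sum]
          exact Finset.sum_congr rfl fun j _ => by ring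
        rw [this, hx0 v hv, mul_zero]
  -- recurrence: boundary vanishing implies global vanishing
  have rec_all : (∀ i : ℕ, i + L ≤ N → g i = 0) → ∀ n, g n = 0 := by
    intro hgz
    set Q : Polynomial ℂ := ∏ k, (X - C (lam k)) ^ ((P k).natDegree + 1) with hQ
    have hQm : Q.Monic :=
      monic_prod_of_monic _ _ fun k _ => (monic_X_sub_C (lam k)).pow _
    have hQdeg : Q.natDegree = d := by
      rw [hQ, natDegree_prod _ _ fun k _ => pow_ne_zero _ (X_sub_C_ne_zero _)]
      simp [natDegree_pow, natDegree_X_sub_C, hd]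
    have hannf : (aeval shiftL Q) f₂ = 0 := by
      have hf : f₂ = ∑ k, efn (P k) (lam k) := by
        funext n; rw [Finset.sum_apply]; exact hf₂ n
      rw [hf, map_sum]
      apply Finset.sum_eq_zero
      intro k _
      rw [hQ, ← Finset.prod_erase_mul Finset.univ _ (Finset.mem_univ k), map_mul,
        Module.End.mul_apply, kill_lemma_s11 _ _ _ (by omega), map_zero]
    have hgW : g = (aeval shiftL (∑ j ∈ Finset.range L, (X : Polynomial ℂ) ^ j)) f₂ := by
      funext n
      rw [map_sum, LinearMap.sum_apply, Finset.sum_apply]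
      simp only [hg]
      refine Finset.sum_congr rfl fun j _ => ?_
      rw [map_pow, aeval_X, shiftL_pow_apply]
    have hanng : (aeval shiftL Q) g = 0 := by
      rw [hgW, ← Module.End.mul_apply, ← map_mul, mul_comm, map_mul, Module.End.mul_apply,
        hannf, map_zero]
    exact vanish_of_rec Q hQm g hanng fun i hi => hgz i (by rw [hQdeg] at hi; omega)
  have orthoB : (∀ u ∈ trajSpace f₁ N L, ∀ v ∈ trajSpace f₂ N L, hinner u v = 0) ↔
      ((∀ n : ℕ, f₂ (n + L) = f₂ n) ∧ ∑ n ∈ Finset.range L, f₂ n = 0) :=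
    ortho_iff.trans ⟨fun h => gzero_iff_B.mp (rec_all h),
      fun hB i _ => gzero_iff_B.mpr hB i⟩
  -- f₂ is not identically zero
  have hf2ne : ∃ n : ℕ, f₂ n ≠ 0 := by
    obtain ⟨n, hn⟩ := exp_poly_ne_zero hm lam P hinj hne hP
    exact ⟨n, by rw [hf₂]; exact hn⟩
  -- B iff exponential form
  have hω1 : omC L ^ L = 1 := omC_pow_L hL0
  have hωk1 : ∀ k : ℕ, (omC L ^ k) ^ L = 1 := by
    intro k; rw [← pow_mul, mul_comm, pow_mul, hω1, one_pow]
  have B_iff_exp : ((∀ n : ℕ, f₂ (n + L) = f₂ n) ∧ ∑ n ∈ Finset.range L, f₂ n = 0) ↔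
      (∃ c₂ : ℕ → ℂ, (∃ k, 0 < k ∧ k < L ∧ c₂ k ≠ 0) ∧
        ∀ n : ℕ, f₂ n = ∑ k ∈ Finset.Ico 1 L,
          c₂ k * (Complex.exp (2 * π * Complex.I * k / L)) ^ n) := by
    constructor
    · rintro ⟨hper, hsum⟩
      set c₂ : ℕ → ℂ :=
        fun k => (L : ℂ)⁻¹ * ∑ i ∈ Finset.range L, f₂ i * ((omC L ^ i)⁻¹) ^ k with hc₂
      have hLC : (L : ℂ) ≠ 0 := Nat.cast_ne_zero.mpr hL0.ne'
      have main : ∀ n < L, f₂ n = ∑ k ∈ Finset.range L, c₂ k * (omC L ^ k) ^ n := by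
        intro n hn
        symm
        have step1 : ∀ k, c₂ k * (omC L ^ k) ^ n
            = ∑ i ∈ Finset.range L, (L : ℂ)⁻¹ * (f₂ i * ((omC L ^ i)⁻¹ * omC L ^ n) ^ k) := by
          intro k
          simp only [hc₂]
          rw [mul_assoc, Finset.sum_mul, Finset.mul_sum]
          refine Finset.sum_congr rfl fun i _ => ?_
          have hp : ((omC L ^ i)⁻¹) ^ k * (omC L ^ k) ^ n
              = ((omC L ^ i)⁻¹ * omC L ^ n) ^ k := by
            rw [mul_pow]
            congr 1
            rw [← pow_mul, ← pow_mul, mul_comm]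
          rw [← hp]; ring
        calc (∑ k ∈ Finset.range L, c₂ k * (omC L ^ k) ^ n)
            = ∑ k ∈ Finset.range L, ∑ i ∈ Finset.range L,
                (L : ℂ)⁻¹ * (f₂ i * ((omC L ^ i)⁻¹ * omC L ^ n) ^ k) :=
              Finset.sum_congr rfl fun k _ => step1 k
          _ = ∑ i ∈ Finset.range L, ∑ k ∈ Finset.range L,
                (L : ℂ)⁻¹ * (f₂ i * ((omC L ^ i)⁻¹ * omC L ^ n) ^ k) := Finset.sum_comm
          _ = ∑ i ∈ Finset.range L,
                (L : ℂ)⁻¹ * (f₂ i * ∑ k ∈ Finset.range L, ((omC L ^ i)⁻¹ * omC L ^ n) ^ k) := by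
              refine Finset.sum_congr rfl fun i _ => ?_
              rw [Finset.mul_sum, Finset.mul_sum]
          _ = (L : ℂ)⁻¹ * (f₂ n * L) := by
              rw [Finset.sum_eq_single_of_mem n (Finset.mem_range.mpr hn)]
              · have h1 : (omC L ^ n)⁻¹ * omC L ^ n = 1 :=
                  inv_mul_cancel₀ (pow_ne_zero _ (omC_ne_zero L))
                rw [h1]
                simp
              · intro i hi hin
                have hζ1 : (omC L ^ i)⁻¹ * omC L ^ n ≠ 1 := by
                  intro he
                  exact hin (omC_pow_inj hL0 (Finset.mem_range.mp hi) hn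
                    ((inv_mul_eq_one₀ (pow_ne_zero _ (omC_ne_zero L))).mp he))
                have hζL : ((omC L ^ i)⁻¹ * omC L ^ n) ^ L = 1 := by
                  rw [mul_pow, inv_pow, hωk1, hωk1, inv_one, one_mul]
                rw [geom_zero hζ1 hζL, mul_zero, mul_zero]
          _ = f₂ n := by field_simp
      have hc20 : c₂ 0 = 0 := by
        simp only [hc₂, pow_zero, mul_one]
        rw [hsum, mul_zero]
      have formula' : ∀ n < L, f₂ n = ∑ k ∈ Finset.Ico 1 L, c₂ k * (omC L ^ k) ^ n := by
        intro n hn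
        rw [main n hn, Finset.range_eq_Ico, Finset.sum_eq_sum_Ico_succ_bot hL0, hc20,
          zero_mul, zero_add]
      have formula_all : ∀ n : ℕ, f₂ n = ∑ k ∈ Finset.Ico 1 L, c₂ k * (omC L ^ k) ^ n := by
        intro n
        rw [periodic_mod hL0 hper n, formula' _ (Nat.mod_lt _ hL0)]
        refine Finset.sum_congr rfl fun k _ => ?_
        congr 1
        have hper2 : ∀ t, (omC L ^ k) ^ (t + L) = (omC L ^ k) ^ t := by
          intro t; rw [pow_add, hωk1, mul_one]
        exact (periodic_mod hL0 hper2 n).symm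
      have hwit : ∃ k, 0 < k ∧ k < L ∧ c₂ k ≠ 0 := by
        by_contra hall
        push_neg at hall
        obtain ⟨n, hn⟩ := hf2ne
        apply hn
        rw [formula_all n]
        apply Finset.sum_eq_zero
        intro k hk
        rw [Finset.mem_Ico] at hk
        rw [hall k hk.1 hk.2, zero_mul]
      exact ⟨c₂, hwit, fun n => by
        rw [formula_all n]
        exact Finset.sum_congr rfl fun k _ => by rw [exp_eq_omC_pow]⟩
    · rintro ⟨c₂, _, hform⟩
      constructor
      · intro n
        rw [hform (n + L), hform n]
        refine Finset.sum_congr rfl fun k _ => ?_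
        rw [exp_eq_omC_pow, pow_add, hωk1, mul_one]
      · calc (∑ n ∈ Finset.range L, f₂ n)
            = ∑ n ∈ Finset.range L, ∑ k ∈ Finset.Ico 1 L, c₂ k * (omC L ^ k) ^ n := by
              refine Finset.sum_congr rfl fun n _ => ?_
              rw [hform n]
              exact Finset.sum_congr rfl fun k _ => by rw [exp_eq_omC_pow]
          _ = ∑ k ∈ Finset.Ico 1 L, ∑ n ∈ Finset.range L, c₂ k * (omC L ^ k) ^ n :=
              Finset.sum_comm
          _ = 0 := by
              apply Finset.sum_eq_zero
              intro k hk
              rw [Finset.mem_Ico] at hk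
              have h1 : omC L ^ k ≠ 1 := by
                intro he
                have : omC L ^ k = omC L ^ 0 := by rw [pow_zero]; exact he
                have := omC_pow_inj hL0 hk.2 hL0 this
                omega
              rw [← Finset.mul_sum, geom_zero h1 (hωk1 k), mul_zero]
  exact ⟨orthoB.trans B_iff_exp, orthoB⟩
end
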